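/- arXiv:2104.00414 — 4 statements merged into one kernel-verified Lean document; each statement's English description precedes it below -/
import Mathlib

section
/- Suppose f = h + conj(g) is a harmonic entire mapping, where f, h, g have orders ρ, ρ_h, ρ_g respectively. Then ρ = max{ρ_h, ρ_g}. -/
open Filter

/-- Maximum modulus of `F` on the circle `|z| = r`. -/
noncomputable def maxMod (F : ℂ → ℂ) (r : ℝ) : ℝ :=
  sSup ((fun z => ‖F z‖) '' Metric.sphere (0 : ℂ) r)

/-- Order of a (harmonic) entire mapping. -/
noncomputable def hOrder (F : ℂ → ℂ) : EReal :=
  limsup (fun r : ℝ => ((Real.log (Real.log (maxMod F r)) / Real.log r : ℝ) : EReal)) atTop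

section Aux

open Metric
open scoped NNReal

lemma maxMod_nonneg (F : ℂ → ℂ) (r : ℝ) : 0 ≤ maxMod F r :=
  Real.sSup_nonneg (by rintro x ⟨z, -, rfl⟩; exact norm_nonneg _)

lemma abs_le_maxMod {F : ℂ → ℂ} (hF : Continuous F) {r : ℝ} {z : ℂ}
    (hz : z ∈ Metric.sphere (0 : ℂ) r) : ‖F z‖ ≤ maxMod F r :=
  le_csSup ((isCompact_sphere 0 r).image (continuous_norm.comp hF)).bddAbove
    ⟨z, hz, rfl⟩

lemma maxMod_congr {F G : ℂ → ℂ} (h : ∀ z, ‖F z‖ = ‖G z‖) :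
    maxMod F = maxMod G := by
  unfold maxMod
  funext r
  congr 1
  exact congrArg (· '' _) (funext h)

lemma maxMod_const {c : ℂ} {r : ℝ} (hr : 0 < r) : maxMod (fun _ => c) r = ‖c‖ := by
  unfold maxMod
  rw [(NormedSpace.sphere_nonempty.mpr hr.le).image_const, csSup_singleton]

/-! ### Order machinery -/

noncomputable def ordE (u : ℝ → ℝ) : EReal :=
  limsup (fun r : ℝ => ((Real.log (Real.log (u r)) / Real.log r : ℝ) : EReal)) atTop

lemma hOrder_eq (F : ℂ → ℂ) : hOrder F = ordE (maxMod F) := rfl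

lemma tendsto_aux (K : ℝ) : Tendsto (fun r : ℝ => K / Real.log r) atTop (nhds 0) :=
  Tendsto.div_atTop tendsto_const_nhds Real.tendsto_log_atTop

lemma ordE_const (u : ℝ → ℝ) {C : ℝ} (h : ∀ᶠ r in atTop, u r = C) : ordE u = 0 := by
  unfold ordE
  have h2 : (fun r : ℝ => ((Real.log (Real.log (u r)) / Real.log r : ℝ) : EReal)) =ᶠ[atTop]
      (fun r : ℝ => ((Real.log (Real.log C) / Real.log r : ℝ) : EReal)) := by
    filter_upwards [h] with r hr; rw [hr]
  rw [limsup_congr h2]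
  have : Tendsto (fun r : ℝ => ((Real.log (Real.log C) / Real.log r : ℝ) : EReal)) atTop
      (nhds (0 : EReal)) := by
    have := (tendsto_aux (Real.log (Real.log C)))
    rw [show ((0 : EReal)) = ((0 : ℝ) : EReal) by simp]
    exact (EReal.tendsto_coe).mpr this |>.congr (fun r => rfl)
  exact this.limsup_eq

lemma ordE_nonneg {u : ℝ → ℝ} (h : Tendsto u atTop atTop) : 0 ≤ ordE u := by
  apply le_limsup_of_frequently_le'
  apply Eventually.frequently
  filter_upwards [h.eventually_ge_atTop (Real.exp 1), eventually_ge_atTop (2:ℝ)] with r h1 h2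
  have hlr : 0 < Real.log r := Real.log_pos (by linarith)
  have h3 : (1:ℝ) ≤ Real.log (u r) := by
    calc (1:ℝ) = Real.log (Real.exp 1) := (Real.log_exp 1).symm
    _ ≤ Real.log (u r) := Real.log_le_log (Real.exp_pos 1) h1
  have : (0:ℝ) ≤ Real.log (Real.log (u r)) / Real.log r :=
    div_nonneg (Real.log_nonneg h3) hlr.le
  exact_mod_cast EReal.coe_le_coe_iff.mpr this

lemma le_exp_rpow {V x t : ℝ} (hV : 0 ≤ V) (hx : 1 ≤ x) (ht : 0 < t)
    (hlog : Real.log (Real.log V) < t * Real.log x) : V ≤ Real.exp (x ^ t) := by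
  have hx0 : (0:ℝ) < x := lt_of_lt_of_le one_pos hx
  have hxt : 1 ≤ x ^ t := Real.one_le_rpow hx ht.le
  rcases le_or_gt V (Real.exp 1) with hVe | hVe
  · exact hVe.trans (Real.exp_le_exp.mpr hxt)
  · have hV1 : 1 < Real.log V := by
      have := Real.log_lt_log (Real.exp_pos 1) hVe
      rwa [Real.log_exp] at this
    have h2 : Real.log (Real.log V) < Real.log (x ^ t) := by
      rwa [Real.log_rpow hx0]
    have h3 : Real.log V < x ^ t :=
      (Real.log_lt_log_iff (by linarith) (by linarith)).mp h2
    have hV0 : 0 < V := lt_trans (Real.exp_pos 1) hVe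
    calc V = Real.exp (Real.log V) := (Real.exp_log hV0).symm
    _ ≤ Real.exp (x ^ t) := Real.exp_le_exp.mpr h3.le

lemma ordE_le (u v w : ℝ → ℝ) {a b c : ℝ} (ha : 1 ≤ a) (hb : 0 ≤ b) (hc : 1 ≤ c)
    (hu1 : ∀ᶠ r in atTop, 1 ≤ u r)
    (hbd : ∀ᶠ r in atTop, u r ≤ a * (v (c * r) + w (c * r)) + b)
    (hv0 : ∀ᶠ r in atTop, 0 ≤ v r) (hw0 : ∀ᶠ r in atTop, 0 ≤ w r) :
    ordE u ≤ max (max (ordE v) (ordE w)) 0 := by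
  set ρ : EReal := max (max (ordE v) (ordE w)) 0 with hρ
  by_contra hlt
  push_neg at hlt
  obtain ⟨t, hρt, htu⟩ := EReal.exists_between_coe_real hlt
  have hρ0 : (0 : EReal) ≤ ρ := le_max_right _ _
  have ht0 : (0:ℝ) < t := by
    have : ((0:ℝ) : EReal) < (t : EReal) := by
      rw [EReal.coe_zero]; exact lt_of_le_of_lt hρ0 hρt
    exact_mod_cast this
  have hc0 : (0:ℝ) < c := lt_of_lt_of_le one_pos hc
  have hvev : ∀ᶠ r in atTop,
      (((Real.log (Real.log (v r)) / Real.log r : ℝ) : EReal)) < (t : EReal) :=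
    eventually_lt_of_limsup_lt (lt_of_le_of_lt ((le_max_left _ _).trans (le_max_left _ _)) hρt)
  have hwev : ∀ᶠ r in atTop,
      (((Real.log (Real.log (w r)) / Real.log r : ℝ) : EReal)) < (t : EReal) :=
    eventually_lt_of_limsup_lt (lt_of_le_of_lt ((le_max_right _ _).trans (le_max_left _ _)) hρt)
  have hvexp : ∀ᶠ r in atTop, v r ≤ Real.exp (r ^ t) := by
    filter_upwards [hvev, hv0, eventually_ge_atTop (2:ℝ)] with r h1 h2 h3
    have hlr : 0 < Real.log r := Real.log_pos (by linarith)
    have h1' : Real.log (Real.log (v r)) / Real.log r < t := by exact_mod_cast h1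
    exact le_exp_rpow h2 (by linarith) ht0 (by
      rw [div_lt_iff₀ hlr] at h1'; linarith [h1'])
  have hwexp : ∀ᶠ r in atTop, w r ≤ Real.exp (r ^ t) := by
    filter_upwards [hwev, hw0, eventually_ge_atTop (2:ℝ)] with r h1 h2 h3
    have hlr : 0 < Real.log r := Real.log_pos (by linarith)
    have h1' : Real.log (Real.log (w r)) / Real.log r < t := by exact_mod_cast h1
    exact le_exp_rpow h2 (by linarith) ht0 (by
      rw [div_lt_iff₀ hlr] at h1'; linarith [h1'])
  have hmap : Tendsto (fun r : ℝ => c * r) atTop atTop :=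
    Tendsto.const_mul_atTop hc0 tendsto_id
  set E : ℝ := max (Real.log (2 * a + b) + c ^ t) (Real.exp 1) with hE
  have hE1 : 1 ≤ Real.log E := by
    calc (1:ℝ) = Real.log (Real.exp 1) := (Real.log_exp 1).symm
    _ ≤ Real.log E := Real.log_le_log (Real.exp_pos 1) (le_max_right _ _)
  have hE0 : (0:ℝ) < E := lt_of_lt_of_le (Real.exp_pos 1) (le_max_right _ _)
  have hmain : ∀ᶠ r in atTop,
      Real.log (Real.log (u r)) / Real.log r ≤ Real.log E / Real.log r + t := by
    filter_upwards [hu1, hbd, hmap.eventually hvexp, hmap.eventually hwexp,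
      eventually_ge_atTop (2:ℝ)] with r h1 h2 h3 h4 h5
    have hr0 : (0:ℝ) < r := by linarith
    have hlr : 0 < Real.log r := Real.log_pos (by linarith)
    have hrt1 : 1 ≤ r ^ t := Real.one_le_rpow (by linarith) ht0.le
    have hab : (0:ℝ) < 2 * a + b := by linarith
    have hlab : 0 ≤ Real.log (2 * a + b) := Real.log_nonneg (by linarith)
    have hu2 : u r ≤ (2 * a + b) * Real.exp ((c * r) ^ t) := by
      have he1 : 1 ≤ Real.exp ((c * r) ^ t) :=
        Real.one_le_exp (Real.rpow_nonneg (by positivity) t)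
      nlinarith [h2, h3, h4, he1]
    have hlu : Real.log (u r) ≤ E * r ^ t := by
      have : Real.log (u r) ≤ Real.log (2 * a + b) + (c * r) ^ t := by
        calc Real.log (u r) ≤ Real.log ((2 * a + b) * Real.exp ((c * r) ^ t)) :=
          Real.log_le_log (by linarith) hu2
        _ = Real.log (2 * a + b) + (c * r) ^ t := by
          rw [Real.log_mul hab.ne' (Real.exp_ne_zero _), Real.log_exp]
      have hcrt : (c * r) ^ t = c ^ t * r ^ t := Real.mul_rpow hc0.le hr0.le
      have hct0 : (0:ℝ) < c ^ t := Real.rpow_pos_of_pos hc0 t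
      have : Real.log (u r) ≤ (Real.log (2 * a + b) + c ^ t) * r ^ t := by
        rw [hcrt] at this
        nlinarith [this, hlab, hrt1, hct0]
      exact this.trans (by
        nlinarith [hrt1, this, hE0, le_max_left (Real.log (2 * a + b) + c ^ t) (Real.exp 1)])
    have hllu : Real.log (Real.log (u r)) ≤ Real.log E + t * Real.log r := by
      rcases le_or_gt (Real.log (u r)) 0 with hneg | hpos
      · have : Real.log (u r) = 0 := le_antisymm hneg (Real.log_nonneg h1)
        rw [this, Real.log_zero]
        nlinarith [hE1, hlr, ht0]
      · calc Real.log (Real.log (u r)) ≤ Real.log (E * r ^ t) :=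
          Real.log_le_log hpos hlu
        _ = Real.log E + t * Real.log r := by
          rw [Real.log_mul hE0.ne' (by positivity), Real.log_rpow hr0]
    calc Real.log (Real.log (u r)) / Real.log r
        ≤ (Real.log E + t * Real.log r) / Real.log r := by
          exact div_le_div_of_nonneg_right hllu hlr.le |>.trans_eq rfl
    _ = Real.log E / Real.log r + t := by
          rw [add_div, mul_div_assoc, div_self hlr.ne', mul_one]
  have hlim : ordE u ≤ (t : EReal) := by
    have htend : Tendsto (fun r : ℝ => ((Real.log E / Real.log r + t : ℝ) : EReal)) atTop
        (nhds ((t : ℝ) : EReal)) := by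
      apply EReal.tendsto_coe.mpr
      have := (tendsto_aux (Real.log E)).add_const t
      simpa using this
    calc ordE u ≤ limsup (fun r : ℝ => ((Real.log E / Real.log r + t : ℝ) : EReal)) atTop := by
          apply limsup_le_limsup ?_ isCobounded_le_of_bot isBounded_le_of_top
          filter_upwards [hmain] with r hr
          exact_mod_cast hr
    _ = (t : EReal) := htend.limsup_eq
  exact absurd (lt_of_lt_of_le htu hlim) (lt_irrefl _)

/-! ### Circle integral computations -/

lemma conj_part_zero (g : ℂ → ℂ) (hg : Differentiable ℂ g) {R : ℝ} (hR : 0 < R) (m : ℕ) :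
    (∮ z in C(0,R), (z⁻¹) ^ (m+1) • z⁻¹ • (starRingEnd ℂ) (g z)) = 0 := by
  have hcont : Continuous fun θ : ℝ => circleMap 0 R θ ^ (m+1) * g (circleMap 0 R θ) :=
    ((continuous_circleMap 0 R).pow (m+1)).mul (hg.continuous.comp (continuous_circleMap 0 R))
  have hK : (∫ θ in (0:ℝ)..2 * Real.pi, circleMap 0 R θ ^ (m+1) * g (circleMap 0 R θ)) = 0 := by
    have h0 : (∮ z in C(0,R), z ^ m * g z) = 0 :=
      Complex.circleIntegral_eq_zero_of_differentiable_on_off_countable hR.le Set.countable_empty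
        ((continuous_pow m).mul hg.continuous).continuousOn
        (fun z _ => ((differentiable_pow m).mul hg).differentiableAt)
    rw [circleIntegral] at h0
    simp only [deriv_circleMap, smul_eq_mul] at h0
    have heq : ∀ θ ∈ Set.uIcc (0:ℝ) (2 * Real.pi),
        circleMap 0 R θ * Complex.I * (circleMap 0 R θ ^ m * g (circleMap 0 R θ))
        = Complex.I * (circleMap 0 R θ ^ (m+1) * g (circleMap 0 R θ)) := by
      intro θ _; rw [pow_succ]; ring
    rw [intervalIntegral.integral_congr heq, intervalIntegral.integral_const_mul] at h0
    rcases mul_eq_zero.mp h0 with h | h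
    · exact absurd h Complex.I_ne_zero
    · exact h
  rw [circleIntegral]
  have key : ∀ θ ∈ Set.uIcc (0:ℝ) (2 * Real.pi),
      deriv (circleMap 0 R) θ •
        ((circleMap 0 R θ)⁻¹ ^ (m+1) • (circleMap 0 R θ)⁻¹ •
          (starRingEnd ℂ) (g (circleMap 0 R θ)))
      = (Complex.I * (((R:ℂ)^2)⁻¹ ^ (m+1))) *
          (starRingEnd ℂ) (circleMap 0 R θ ^ (m+1) * g (circleMap 0 R θ)) := by
    intro θ _
    have hc : circleMap 0 R θ ≠ 0 := circleMap_ne_center hR.ne'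
    have hRC : (R:ℂ) ≠ 0 := by exact_mod_cast hR.ne'
    have hconj : (starRingEnd ℂ) (circleMap 0 R θ) = (R:ℂ)^2 * (circleMap 0 R θ)⁻¹ := by
      have h1 : circleMap 0 R θ * (starRingEnd ℂ) (circleMap 0 R θ) = (R:ℂ)^2 := by
        rw [Complex.mul_conj]
        rw [Complex.normSq_eq_norm_sq, norm_circleMap_zero, abs_of_pos hR]
        push_cast; ring
      field_simp at h1 ⊢
      linear_combination h1
    rw [deriv_circleMap]
    simp only [smul_eq_mul, map_mul, map_pow, hconj]
    field_simp
    rw [mul_assoc, ← mul_pow, mul_comm ((starRingEnd ℂ) _)]; congr 2; field_simp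
  rw [intervalIntegral.integral_congr key, intervalIntegral.integral_const_mul]
  have hconint : (∫ θ in (0:ℝ)..2 * Real.pi,
      (starRingEnd ℂ) (circleMap 0 R θ ^ (m+1) * g (circleMap 0 R θ)))
      = (starRingEnd ℂ) (∫ θ in (0:ℝ)..2 * Real.pi,
          circleMap 0 R θ ^ (m+1) * g (circleMap 0 R θ)) := by
    have := (Complex.conjCLE.toContinuousLinearMap).intervalIntegral_comp_comm
      ((hcont.intervalIntegrable (0:ℝ) (2 * Real.pi)) :
        IntervalIntegrable _ MeasureTheory.volume _ _)
    simpa using this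
  rw [hconint, hK]
  simp

lemma coeff_bound (f h g : ℂ → ℂ) (hh : Differentiable ℂ h) (hg : Differentiable ℂ g)
    (hf : ∀ z, f z = h z + (starRingEnd ℂ) (g z)) {R : ℝ} (hR : 0 < R) {n : ℕ} (hn : 1 ≤ n) :
    ‖(cauchyPowerSeries h 0 R).coeff n‖ * R ^ n ≤ maxMod f R := by
  obtain ⟨m, rfl⟩ : ∃ m, n = m + 1 := ⟨n - 1, (Nat.succ_pred_eq_of_pos hn).symm⟩
  have hfc : Continuous f := by
    have : f = fun z => h z + (starRingEnd ℂ) (g z) := funext hf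
    rw [this]
    exact hh.continuous.add (continuous_star.comp hg.continuous)
  have hint : ∀ (F : ℂ → ℂ), Continuous F →
      CircleIntegrable (fun z => (z⁻¹) ^ (m+1) • z⁻¹ • F z) 0 R := by
    intro F hF
    apply ContinuousOn.circleIntegrable hR.le
    have hne : ∀ z ∈ Metric.sphere (0:ℂ) R, z ≠ 0 := fun z hz => ne_of_mem_sphere hz hR.ne'
    exact ((continuousOn_id.inv₀ hne).pow (m+1)).smul
      ((continuousOn_id.inv₀ hne).smul hF.continuousOn)
  have hsplit : (∮ z in C(0,R), (z⁻¹) ^ (m+1) • z⁻¹ • f z)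
      = ∮ z in C(0,R), (z⁻¹) ^ (m+1) • z⁻¹ • h z := by
    have hsub : (∮ z in C(0,R), ((z⁻¹) ^ (m+1) • z⁻¹ • f z - (z⁻¹) ^ (m+1) • z⁻¹ • h z))
        = (∮ z in C(0,R), (z⁻¹) ^ (m+1) • z⁻¹ • f z)
          - ∮ z in C(0,R), (z⁻¹) ^ (m+1) • z⁻¹ • h z :=
      circleIntegral.integral_sub (hint f hfc) (hint h hh.continuous)
    have hdiff : (∮ z in C(0,R), ((z⁻¹) ^ (m+1) • z⁻¹ • f z - (z⁻¹) ^ (m+1) • z⁻¹ • h z))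
        = ∮ z in C(0,R), (z⁻¹) ^ (m+1) • z⁻¹ • (starRingEnd ℂ) (g z) := by
      apply circleIntegral.integral_congr hR.le
      intro z _
      simp only [hf z, smul_eq_mul]
      ring
    rw [hdiff, conj_part_zero g hg hR m] at hsub
    exact (sub_eq_zero.mp hsub.symm)
  have hcoeff : (cauchyPowerSeries h 0 R).coeff (m+1)
      = (2 * Real.pi * Complex.I : ℂ)⁻¹ • ∮ z in C(0,R), (z⁻¹) ^ (m+1) • z⁻¹ • f z := by
    have := cauchyPowerSeries_apply h 0 R (m+1) 1
    rw [hsplit]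
    rw [FormalMultilinearSeries.coeff]
    convert this using 3 with z
    · rfl
    funext z
    rw [sub_zero, one_div]
  set M := maxMod f R with hM
  have hM0 : 0 ≤ M := maxMod_nonneg f R
  have hbound : ‖(cauchyPowerSeries h 0 R).coeff (m+1)‖
      ≤ R * (R⁻¹ ^ (m+1) * (R⁻¹ * M)) := by
    rw [hcoeff]
    have := circleIntegral.norm_two_pi_i_inv_smul_integral_le_of_norm_le_const hR.le
      (f := fun z => (z⁻¹) ^ (m+1) • z⁻¹ • f z) (c := 0) (C := R⁻¹ ^ (m+1) * (R⁻¹ * M)) ?_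
    · exact this
    · intro z hz
      have hzn : ‖z‖ = R := by rwa [mem_sphere_iff_norm, sub_zero] at hz
      simp only [norm_smul, norm_pow, norm_inv, hzn]
      have : ‖f z‖ ≤ M := abs_le_maxMod hfc hz
      gcongr
  calc ‖(cauchyPowerSeries h 0 R).coeff (m+1)‖ * R ^ (m+1)
      ≤ (R * (R⁻¹ ^ (m+1) * (R⁻¹ * M))) * R ^ (m+1) := by
        exact mul_le_mul_of_nonneg_right hbound (by positivity)
  _ = M := by field_simp [hR.ne']; rw [mul_right_comm, ← mul_pow, one_div_mul_cancel hR.ne', one_pow, one_mul]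

lemma hasSum_cauchy {h : ℂ → ℂ} (hh : Differentiable ℂ h) {R : ℝ≥0} (hR : 0 < R) (z : ℂ) :
    HasSum (fun n => z ^ n • (cauchyPowerSeries h 0 (R:ℝ)).coeff n) (h z) := by
  have hs := (hh.hasFPowerSeriesOnBall 0 hR).hasSum (y := z)
    (by simp : z ∈ Metric.eball (0:ℂ) ⊤)
  simp only [FormalMultilinearSeries.apply_eq_pow_smul_coeff, zero_add] at hs
  exact hs

lemma coeff_zero_cauchy {h : ℂ → ℂ} (hh : Differentiable ℂ h) {R : ℝ≥0} (hR : 0 < R) :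
    (cauchyPowerSeries h 0 (R:ℝ)).coeff 0 = h 0 := by
  have := (hh.hasFPowerSeriesOnBall 0 hR).coeff_zero (fun _ => 1)
  rw [← this]
  rfl

lemma maxMod_h_le (f h g : ℂ → ℂ) (hh : Differentiable ℂ h) (hg : Differentiable ℂ g)
    (hf : ∀ z, f z = h z + (starRingEnd ℂ) (g z)) {r : ℝ} (hr : 0 < r) :
    maxMod h r ≤ ‖h 0‖ + maxMod f (2 * r) := by
  set M := maxMod f (2 * r) with hMdef
  have hM0 : 0 ≤ M := maxMod_nonneg _ _
  set A := ‖h 0‖ with hA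
  have hA0 : 0 ≤ A := norm_nonneg _
  set R : ℝ≥0 := ⟨2 * r, by positivity⟩ with hRdef
  have hRpos : 0 < R := by
    rw [← NNReal.coe_lt_coe]
    show (0:ℝ) < 2 * r
    linarith
  have hRr : (R : ℝ) = 2 * r := rfl
  set p := cauchyPowerSeries h 0 (R:ℝ) with hp
  set b : ℕ → ℝ := fun n => if n = 0 then A else M * (1/2) ^ n with hb
  have hb_nonneg : ∀ n, 0 ≤ b n := by
    intro n
    by_cases hn : n = 0
    · simp [hb, hn, hA0]
    · simp only [hb, if_neg hn]
      positivity
  have hterm : ∀ (z : ℂ), ‖z‖ = r → ∀ n, ‖z ^ n • p.coeff n‖ ≤ b n := by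
    intro z hz n
    rcases Nat.eq_zero_or_pos n with rfl | hn
    · simp [hb, pow_zero, one_smul,
        hp, coeff_zero_cauchy hh hRpos, hA]
    · have hcb := coeff_bound f h g hh hg hf (R := (R:ℝ)) (by rw [hRr]; linarith) hn
      rw [← hp] at hcb
      have h2r : (0:ℝ) < 2 * r := by linarith
      have hpow : (0:ℝ) < (2 * r) ^ n := by positivity
      have hcb' : ‖p.coeff n‖ ≤ M / (2 * r) ^ n := by
        rw [le_div_iff₀ hpow]
        rwa [hRr] at hcb
      have : ‖z ^ n • p.coeff n‖ = r ^ n * ‖p.coeff n‖ := by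
        rw [norm_smul, norm_pow, hz]
      rw [this, hb]
      simp only [if_neg (Nat.pos_iff_ne_zero.mp hn)]
      calc r ^ n * ‖p.coeff n‖ ≤ r ^ n * (M / (2 * r) ^ n) := by
            exact mul_le_mul_of_nonneg_left hcb' (by positivity)
      _ = M * (1/2) ^ n := by
            rw [mul_pow]
            field_simp
            rw [mul_assoc, ← mul_pow]; norm_num
  have hbsum : Summable b := by
    apply Summable.of_nonneg_of_le hb_nonneg (fun n => ?_)
      (((summable_geometric_of_lt_one (by norm_num) (by norm_num : (1/2:ℝ) < 1))).mul_left
        (max A M))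
    by_cases hn : n = 0
    · simp only [hb, if_pos hn, hn, pow_zero, mul_one]
      exact le_max_left _ _
    · simp only [hb, if_neg hn]
      exact mul_le_mul_of_nonneg_right (le_max_right _ _) (by positivity)
  have hbtsum : ∑' n, b n = A + M := by
    rw [Summable.tsum_eq_zero_add hbsum]
    have h1 : b 0 = A := by simp [hb]
    have h2 : ∑' n, b (n + 1) = M := by
      have : (fun n : ℕ => b (n + 1)) = fun n : ℕ => (M * (1/2)) * (1/2) ^ n := by
        funext n
        simp only [hb, if_neg (Nat.succ_ne_zero n), pow_succ]
        ring
      rw [this, tsum_mul_left, tsum_geometric_of_lt_one (by norm_num) (by norm_num)]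
      norm_num
      ring
    rw [h1, h2]
  apply Real.sSup_le _ (by positivity)
  rintro x ⟨z, hz, rfl⟩
  have hzr : ‖z‖ = r := by
    rw [mem_sphere_iff_norm, sub_zero] at hz
    exact hz
  have hs := hasSum_cauchy hh hRpos z
  rw [← hp] at hs
  have hsn : Summable fun n => ‖z ^ n • p.coeff n‖ :=
    Summable.of_nonneg_of_le (fun n => norm_nonneg _) (hterm z hzr) hbsum
  calc ‖h z‖ = ‖h z‖ := rfl
  _ = ‖∑' n, z ^ n • p.coeff n‖ := by rw [hs.tsum_eq]
  _ ≤ ∑' n, ‖z ^ n • p.coeff n‖ := norm_tsum_le_tsum_norm hsn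
  _ ≤ ∑' n, b n := Summable.tsum_le_tsum (hterm z hzr) hsn hbsum
  _ = A + M := hbtsum

lemma cauchy_indep {h : ℂ → ℂ} (hh : Differentiable ℂ h) {R S : ℝ} (hR : 0 < R) (hS : 0 < S) :
    cauchyPowerSeries h 0 R = cauchyPowerSeries h 0 S := by
  have h1 := (hh.hasFPowerSeriesOnBall 0 (R := R.toNNReal)
    (by simp [Real.toNNReal_pos]; exact hR)).hasFPowerSeriesAt
  have h2 := (hh.hasFPowerSeriesOnBall 0 (R := S.toNNReal)
    (by simp [Real.toNNReal_pos]; exact hS)).hasFPowerSeriesAt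
  rw [Real.coe_toNNReal _ hR.le] at h1
  rw [Real.coe_toNNReal _ hS.le] at h2
  exact h1.eq_formalMultilinearSeries h2

lemma exists_coeff_ne_zero {h : ℂ → ℂ} (hh : Differentiable ℂ h) (hnc : ∃ z, h z ≠ h 0) :
    ∃ n, 1 ≤ n ∧ (cauchyPowerSeries h 0 1).coeff n ≠ 0 := by
  by_contra hcon
  push_neg at hcon
  obtain ⟨z, hz⟩ := hnc
  have hco : ((1:ℝ≥0):ℝ) = (1:ℝ) := NNReal.coe_one
  have hs := hasSum_cauchy hh (R := 1) one_pos z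
  rw [hco] at hs
  have hsingle : HasSum (fun n => z ^ n • (cauchyPowerSeries h 0 1).coeff n)
      (z ^ 0 • (cauchyPowerSeries h 0 1).coeff 0) := by
    apply hasSum_single
    intro n hn
    rw [hcon n (Nat.one_le_iff_ne_zero.mpr hn)]
    simp
  have hc0 : (cauchyPowerSeries h 0 ((1:ℝ≥0):ℝ)).coeff 0 = h 0 := coeff_zero_cauchy hh one_pos
  rw [hco] at hc0
  have := hs.unique hsingle
  rw [pow_zero, one_smul, hc0] at this
  exact hz this

lemma maxMod_tendsto {f h g : ℂ → ℂ} (hh : Differentiable ℂ h) (hg : Differentiable ℂ g)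
    (hf : ∀ z, f z = h z + (starRingEnd ℂ) (g z)) (hnc : ∃ z, h z ≠ h 0) :
    Tendsto (maxMod f) atTop atTop := by
  obtain ⟨n, hn1, hne⟩ := exists_coeff_ne_zero hh hnc
  set ε := ‖(cauchyPowerSeries h 0 1).coeff n‖ with hε
  have hε0 : 0 < ε := by
    rw [hε]
    exact norm_pos_iff.mpr hne
  have hbd : ∀ R : ℝ, 0 < R → ε * R ^ n ≤ maxMod f R := by
    intro R hR
    have := coeff_bound f h g hh hg hf hR hn1
    rwa [cauchy_indep hh hR one_pos] at this
  apply tendsto_atTop_mono' atTop (show ∀ᶠ R in atTop, ε * R ≤ maxMod f R from ?_)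
  · exact Tendsto.const_mul_atTop hε0 tendsto_id
  · filter_upwards [eventually_ge_atTop (1:ℝ)] with R hR1
    have hR0 : (0:ℝ) < R := by linarith
    calc ε * R = ε * R ^ 1 := by rw [pow_one]
    _ ≤ ε * R ^ n := by
        apply mul_le_mul_of_nonneg_left _ hε0.le
        exact pow_le_pow_right₀ hR1 hn1
    _ ≤ maxMod f R := hbd R hR0

end Aux

theorem order_of_harmonic_eq_max (h g : ℂ → ℂ)
    (hh : Differentiable ℂ h) (hg : Differentiable ℂ g) (hg0 : g 0 = 0) :
    hOrder (fun z => h z + starRingEnd ℂ (g z)) = max (hOrder h) (hOrder g) := by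
  set f : ℂ → ℂ := fun z => h z + starRingEnd ℂ (g z) with hfdef
  have hf : ∀ z, f z = h z + starRingEnd ℂ (g z) := fun z => rfl
  have hfc : Continuous f := hh.continuous.add (continuous_star.comp hg.continuous)
  -- the conjugate of f, representing g + conj h
  have hfconj : ∀ z, (starRingEnd ℂ) (f z) = g z + starRingEnd ℂ (h z) := by
    intro z
    rw [hf z, map_add, Complex.conj_conj]
    exact add_comm _ _
  have hmmconj : maxMod (fun z => (starRingEnd ℂ) (f z)) = maxMod f :=
    maxMod_congr (fun z => Complex.norm_conj (f z))
  by_cases hconst : (∀ z, h z = h 0) ∧ (∀ z, g z = g 0)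
  · -- both constant
    obtain ⟨hch, hcg⟩ := hconst
    have hceq : ∀ z, f z = h 0 := by
      intro z
      rw [hf z, hch z, hcg z, hg0, map_zero, add_zero]
    have h1 : hOrder f = 0 := by
      rw [hOrder_eq]
      apply ordE_const (C := ‖h 0‖)
      filter_upwards [eventually_gt_atTop (0:ℝ)] with r hr
      rw [show f = fun _ => h 0 from funext hceq, maxMod_const hr]
    have h2 : hOrder h = 0 := by
      rw [hOrder_eq]
      apply ordE_const (C := ‖h 0‖)
      filter_upwards [eventually_gt_atTop (0:ℝ)] with r hr
      rw [show h = fun _ => h 0 from funext hch, maxMod_const hr]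
    have h3 : hOrder g = 0 := by
      rw [hOrder_eq]
      apply ordE_const (C := ‖g 0‖)
      filter_upwards [eventually_gt_atTop (0:ℝ)] with r hr
      rw [show g = fun _ => g 0 from funext hcg, maxMod_const hr]
    rw [h1, h2, h3]
    simp
  · -- not both constant
    have hcases : (∃ z, h z ≠ h 0) ∨ (∃ z, g z ≠ g 0) := by
      rcases not_and_or.mp hconst with hl | hr
      · left; push_neg at hl; exact hl
      · right; push_neg at hr; exact hr
    have hMf : Tendsto (maxMod f) atTop atTop := by
      rcases hcases with hnc | hnc
      · exact maxMod_tendsto hh hg hf hnc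
      · have := maxMod_tendsto (f := fun z => (starRingEnd ℂ) (f z)) hg hh hfconj hnc
        rwa [hmmconj] at this
    have hρf0 : (0 : EReal) ≤ hOrder f := by
      rw [hOrder_eq]; exact ordE_nonneg hMf
    have hmax0 : (0 : EReal) ≤ max (hOrder h) (hOrder g) := by
      rcases hcases with hnc | hnc
      · refine le_trans ?_ (le_max_left _ _)
        rw [hOrder_eq]
        exact ordE_nonneg (maxMod_tendsto (f := h) (g := fun _ => 0) hh
          (differentiable_const 0) (by intro z; simp) hnc)
      · refine le_trans ?_ (le_max_right _ _)
        rw [hOrder_eq]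
        exact ordE_nonneg (maxMod_tendsto (f := g) (g := fun _ => 0) hg
          (differentiable_const 0) (by intro z; simp) hnc)
    -- upper bound for hOrder f
    have hupper : hOrder f ≤ max (hOrder h) (hOrder g) := by
      have := ordE_le (maxMod f) (maxMod h) (maxMod g) (a := 1) (b := 0) (c := 1)
        le_rfl le_rfl le_rfl
        (hMf.eventually_ge_atTop 1)
        (by
          filter_upwards [eventually_gt_atTop (0:ℝ)] with r hr
          rw [one_mul, one_mul, add_zero]
          apply Real.sSup_le _ (add_nonneg (maxMod_nonneg h r) (maxMod_nonneg g r))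
          rintro x ⟨z, hz, rfl⟩
          calc ‖f z‖ ≤ ‖h z‖ + ‖(starRingEnd ℂ) (g z)‖ := by
                rw [hf z]; exact norm_add_le _ _
          _ = ‖h z‖ + ‖g z‖ := by rw [Complex.norm_conj]
          _ ≤ maxMod h r + maxMod g r :=
                add_le_add (abs_le_maxMod hh.continuous hz) (abs_le_maxMod hg.continuous hz))
        (Eventually.of_forall (fun r => maxMod_nonneg h r))
        (Eventually.of_forall (fun r => maxMod_nonneg g r))
      rw [hOrder_eq]
      calc ordE (maxMod f) ≤ max (max (ordE (maxMod h)) (ordE (maxMod g))) 0 := this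
      _ = max (hOrder h) (hOrder g) := by
          rw [← hOrder_eq, ← hOrder_eq]
          exact max_eq_left hmax0
    -- lower bounds
    have hzero_ord : ordE (fun _ : ℝ => (0:ℝ)) = 0 :=
      ordE_const (fun _ : ℝ => (0:ℝ)) (C := (0:ℝ)) (Eventually.of_forall (fun _ => rfl))
    have hlower_h : hOrder h ≤ hOrder f := by
      by_cases hch : ∀ z, h z = h 0
      · have : hOrder h = 0 := by
          rw [hOrder_eq]
          apply ordE_const (C := ‖h 0‖)
          filter_upwards [eventually_gt_atTop (0:ℝ)] with r hr
          rw [show h = fun _ => h 0 from funext hch, maxMod_const hr]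
        rw [this]; exact hρf0
      · push_neg at hch
        have hMh : Tendsto (maxMod h) atTop atTop :=
          maxMod_tendsto (f := h) (g := fun _ => 0) hh (differentiable_const 0)
            (by intro z; simp) hch
        have := ordE_le (maxMod h) (maxMod f) (fun _ => 0)
          (a := 1) (b := ‖h 0‖) (c := 2)
          le_rfl (norm_nonneg _) one_le_two
          (hMh.eventually_ge_atTop 1)
          (by
            filter_upwards [eventually_gt_atTop (0:ℝ)] with r hr
            have := maxMod_h_le f h g hh hg hf hr
            simp only [one_mul, add_zero]
            linarith)
          (Eventually.of_forall (fun r => maxMod_nonneg f r))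
          (Eventually.of_forall (fun _ => le_rfl))
        rw [hOrder_eq, hOrder_eq]
        calc ordE (maxMod h) ≤ max (max (ordE (maxMod f)) (ordE (fun _ => 0))) 0 := this
        _ = ordE (maxMod f) := by
            rw [hzero_ord, ← hOrder_eq]
            rw [max_eq_left hρf0, max_eq_left hρf0]
    have hlower_g : hOrder g ≤ hOrder f := by
      by_cases hcg : ∀ z, g z = g 0
      · have : hOrder g = 0 := by
          rw [hOrder_eq]
          apply ordE_const (C := ‖g 0‖)
          filter_upwards [eventually_gt_atTop (0:ℝ)] with r hr
          rw [show g = fun _ => g 0 from funext hcg, maxMod_const hr]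
        rw [this]; exact hρf0
      · push_neg at hcg
        have hMg : Tendsto (maxMod g) atTop atTop :=
          maxMod_tendsto (f := g) (g := fun _ => 0) hg (differentiable_const 0)
            (by intro z; simp) hcg
        have := ordE_le (maxMod g) (maxMod f) (fun _ => 0)
          (a := 1) (b := ‖g 0‖) (c := 2)
          le_rfl (norm_nonneg _) one_le_two
          (hMg.eventually_ge_atTop 1)
          (by
            filter_upwards [eventually_gt_atTop (0:ℝ)] with r hr
            have := maxMod_h_le (fun z => (starRingEnd ℂ) (f z)) g h hg hh hfconj hr
            rw [hmmconj] at this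
            simp only [one_mul, add_zero]
            linarith)
          (Eventually.of_forall (fun r => maxMod_nonneg f r))
          (Eventually.of_forall (fun _ => le_rfl))
        rw [hOrder_eq, hOrder_eq]
        calc ordE (maxMod g) ≤ max (max (ordE (maxMod f)) (ordE (fun _ => 0))) 0 := this
        _ = ordE (maxMod f) := by
            rw [hzero_ord, ← hOrder_eq]
            rw [max_eq_left hρf0, max_eq_left hρf0]
    exact le_antisymm hupper (max_le hlower_h hlower_g)
end

section
/- Let f(z) = z + Σ_{k≥2} a_k z^k + conj(Σ_{k≥1} b_k z^k) be harmonic in the unit disk with |b_1| < 1 and Σ_{k≥2} k(|a_k| + |b_k|) ≤ 1 − |b_1|. Then f is sense-preserving and univalent in the unit disk. -/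
open Finset Metric

lemma aux_hasDerivAt (c : ℕ → ℂ) (m : ℕ)
    (hc : Summable fun k : ℕ => ((k : ℝ) + m + 1) * ‖c k‖) {z : ℂ} (hz : ‖z‖ < 1) :
    HasDerivAt (fun w : ℂ => ∑' k : ℕ, c k * w ^ (k + m + 1))
      (∑' k : ℕ, ((k : ℂ) + m + 1) * c k * z ^ (k + m)) z := by
  have hcast : ∀ k : ℕ, ‖(((k : ℂ) + m + 1))‖ = (k : ℝ) + m + 1 := by
    intro k
    have h : ((k : ℂ) + m + 1) = (((k + m + 1 : ℕ) : ℝ) : ℂ) := by push_cast; ring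
    rw [h, Complex.norm_real, Real.norm_eq_abs, abs_of_nonneg (by positivity)]
    push_cast; ring
  have hc0 : Summable fun k : ℕ => ‖c k‖ := by
    refine hc.of_nonneg_of_le (fun k => norm_nonneg _) (fun k => ?_)
    nlinarith [norm_nonneg (c k), Nat.cast_nonneg (α := ℝ) k]
  apply hasDerivAt_of_tendstoUniformlyOn (l := (Filter.atTop : Filter ℕ)) (isOpen_ball (x := (0:ℂ)) (ε := 1))
    (f := fun n (w : ℂ) => ∑ k ∈ range n, c k * w ^ (k + m + 1))
    (f' := fun n (w : ℂ) => ∑ k ∈ range n, ((k : ℂ) + m + 1) * c k * w ^ (k + m))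
    (g := fun w : ℂ => ∑' k : ℕ, c k * w ^ (k + m + 1))
    (g' := fun w : ℂ => ∑' k : ℕ, ((k : ℂ) + m + 1) * c k * w ^ (k + m))
  · apply tendstoUniformlyOn_tsum_nat hc
    intro k w hw
    rw [mem_ball_zero_iff] at hw
    rw [norm_mul, norm_mul, hcast]
    have h1 : ‖w ^ (k + m)‖ ≤ 1 := by
      rw [norm_pow]
      exact pow_le_one₀ (norm_nonneg _) hw.le
    nlinarith [norm_nonneg (c k), norm_nonneg (w ^ (k + m)), Nat.cast_nonneg (α := ℝ) k,
      mul_nonneg (show (0:ℝ) ≤ ((k:ℝ)+m+1) by positivity) (norm_nonneg (c k))]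
  · filter_upwards with n
    intro x hx
    apply HasDerivAt.fun_sum
    intro k hk
    have h1 := (hasDerivAt_pow (k + m + 1) x).const_mul (c k)
    have h2 : c k * (↑(k + m + 1) * x ^ (k + m + 1 - 1)) = ((k : ℂ) + m + 1) * c k * x ^ (k + m) := by
      rw [Nat.add_sub_cancel]; push_cast; ring
    rwa [h2] at h1
  · intro x hx
    rw [mem_ball_zero_iff] at hx
    have hs : Summable fun k : ℕ => c k * x ^ (k + m + 1) := by
      refine Summable.of_norm_bounded hc0 (fun k => ?_)
      rw [norm_mul, norm_pow]
      exact mul_le_of_le_one_right (norm_nonneg _) (pow_le_one₀ (norm_nonneg _) hx.le)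
    exact hs.hasSum.tendsto_sum_nat
  · exact mem_ball_zero_iff.mpr hz

open Finset Metric

lemma tsum_shift_bound (c : ℕ → ℝ) (hc : Summable fun k : ℕ => ((k:ℝ)+2) * c k)
    (hc0 : ∀ k, 0 ≤ c k) {r : ℝ} (hr0 : 0 ≤ r) (hr1 : r ≤ 1) :
    ∑' k : ℕ, ((k:ℝ)+2) * c k * r^(k+1) ≤ r * ∑' k : ℕ, ((k:ℝ)+2) * c k := by
  rw [← tsum_mul_left]
  refine Summable.tsum_le_tsum (fun k => ?_) ?_ (hc.mul_left r)
  · have h1 : r^k ≤ 1 := pow_le_one₀ hr0 hr1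
    have h2 : r^(k+1) = r * r^k := by ring
    have h3 : 0 ≤ ((k:ℝ)+2) * c k := by
      have := hc0 k; positivity
    rw [h2]
    nlinarith [pow_nonneg hr0 k, mul_le_mul_of_nonneg_left h1 (mul_nonneg h3 hr0)]
  · refine Summable.of_nonneg_of_le (fun k => ?_) (fun k => ?_) (hc.mul_left r)
    · have := hc0 k; positivity
    · have h1 : r^k ≤ 1 := pow_le_one₀ hr0 hr1
      have h3 : 0 ≤ ((k:ℝ)+2) * c k := by have := hc0 k; positivity
      have h2 : r^(k+1) = r * r^k := by ring
      rw [h2]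
      nlinarith [pow_nonneg hr0 k, mul_le_mul_of_nonneg_left h1 (mul_nonneg h3 hr0)]

lemma pow_diff_bound (z1 z2 : ℂ) : ∀ n : ℕ,
    ‖z1 ^ (n+1) - z2 ^ (n+1)‖ ≤ ((n:ℝ)+1) * (max ‖z1‖ ‖z2‖) ^ n * ‖z1 - z2‖ := by
  intro n
  induction n with
  | zero => simp
  | succ n ih =>
    set M := max ‖z1‖ ‖z2‖ with hM
    have hM0 : 0 ≤ M := le_trans (norm_nonneg _) (le_max_left _ _)
    have key : z1 ^ (n+1+1) - z2 ^ (n+1+1)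
        = z1 * (z1^(n+1) - z2^(n+1)) + (z1 - z2) * z2^(n+1) := by ring
    have h1 : ‖z1 ^ (n+1+1) - z2 ^ (n+1+1)‖
        ≤ ‖z1‖ * ‖z1^(n+1)-z2^(n+1)‖ + ‖z1-z2‖ * ‖z2‖^(n+1) := by
      rw [key]
      refine (norm_add_le _ _).trans ?_
      rw [norm_mul, norm_mul, norm_pow]
    have h2 : ‖z1‖ * ‖z1^(n+1)-z2^(n+1)‖ ≤ M * (((n:ℝ)+1) * M^n * ‖z1-z2‖) := by
      refine mul_le_mul (le_max_left _ _) ih (norm_nonneg _) hM0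
    have h3 : ‖z1-z2‖ * ‖z2‖^(n+1) ≤ ‖z1-z2‖ * M^(n+1) := by
      refine mul_le_mul_of_nonneg_left ?_ (norm_nonneg _)
      exact pow_le_pow_left₀ (norm_nonneg _) (le_max_right _ _) _
    push_cast
    calc ‖z1 ^ (n+1+1) - z2 ^ (n+1+1)‖
        ≤ M * (((n:ℝ)+1) * M^n * ‖z1-z2‖) + ‖z1-z2‖ * M^(n+1) := by linarith
      _ = ((n:ℝ)+1+1) * M^(n+1) * ‖z1-z2‖ := by rw [pow_succ]; ring

lemma summable_shift (b : ℕ → ℂ)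
    (hB2 : Summable fun k : ℕ => ((k:ℝ)+2) * ‖b (k+2)‖) :
    Summable fun k : ℕ => ((k:ℝ)+1) * ‖b (k+1)‖ := by
  rw [← summable_nat_add_iff 1]
  refine hB2.congr fun n => ?_
  have h : n + 1 + 1 = n + 2 := rfl
  rw [h]
  push_cast
  ring

lemma est_b (b : ℕ → ℂ)
    (hB2 : Summable fun k : ℕ => ((k:ℝ)+2) * ‖b (k+2)‖) {r : ℝ} (hr0 : 0 ≤ r) (hr1 : r ≤ 1) :
    ∑' k : ℕ, ((k:ℝ)+1) * ‖b (k+1)‖ * r^k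
      ≤ ‖b 1‖ + r * ∑' k : ℕ, ((k:ℝ)+2) * ‖b (k+2)‖ := by
  have hB1 := summable_shift b hB2
  have hv : Summable fun k : ℕ => ((k:ℝ)+1) * ‖b (k+1)‖ * r^k := by
    refine Summable.of_nonneg_of_le (fun k => by positivity) (fun k => ?_) hB1
    have h1 : r^k ≤ 1 := pow_le_one₀ hr0 hr1
    have h3 : 0 ≤ ((k:ℝ)+1) * ‖b (k+1)‖ := by positivity
    nlinarith [pow_nonneg hr0 k]
  rw [Summable.tsum_eq_zero_add hv]
  have h0 : ((0:ℕ):ℝ) + 1 = 1 := by norm_num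
  simp only [Nat.cast_zero, zero_add, pow_zero, one_mul, mul_one]
  gcongr
  have he : ∀ k : ℕ, (((k+1:ℕ):ℝ)+1) * ‖b (k+1+1)‖ * r^(k+1)
      = ((k:ℝ)+2) * ‖b (k+2)‖ * r^(k+1) := by
    intro k
    have h : k + 1 + 1 = k + 2 := rfl
    rw [h]; push_cast; ring
  calc ∑' k : ℕ, (((k+1:ℕ):ℝ)+1) * ‖b (k+1+1)‖ * r^(k+1)
      = ∑' k : ℕ, ((k:ℝ)+2) * ‖b (k+2)‖ * r^(k+1) := tsum_congr he
    _ ≤ r * ∑' k : ℕ, ((k:ℝ)+2) * ‖b (k+2)‖ :=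
        tsum_shift_bound _ hB2 (fun k => norm_nonneg _) hr0 hr1

theorem coeff_criterion_univalent (a b : ℕ → ℂ)
    (hb1 : Norm.norm (b 1) < 1)
    (hsum : Summable (fun k : ℕ =>
      ((k : ℝ) + 2) * (Norm.norm (a (k + 2)) + Norm.norm (b (k + 2)))))
    (hcoef : ∑' k : ℕ, ((k : ℝ) + 2) * (Norm.norm (a (k + 2)) + Norm.norm (b (k + 2)))
      ≤ 1 - Norm.norm (b 1)) :
    Set.InjOn
      (fun z : ℂ => (z + ∑' k : ℕ, a (k + 2) * z ^ (k + 2)) +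
        starRingEnd ℂ (∑' k : ℕ, b (k + 1) * z ^ (k + 1)))
      (Metric.ball (0 : ℂ) 1) ∧
    ∀ z ∈ Metric.ball (0 : ℂ) 1,
      Norm.norm (deriv (fun w : ℂ => ∑' k : ℕ, b (k + 1) * w ^ (k + 1)) z) <
      Norm.norm (deriv (fun w : ℂ => w + ∑' k : ℕ, a (k + 2) * w ^ (k + 2)) z) := by
  have hA2 : Summable fun k : ℕ => ((k:ℝ)+2) * ‖a (k+2)‖ := by
    refine hsum.of_nonneg_of_le (fun k => by positivity) (fun k => ?_)
    exact mul_le_mul_of_nonneg_left (le_add_of_nonneg_right (norm_nonneg _)) (by positivity)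
  have hB2 : Summable fun k : ℕ => ((k:ℝ)+2) * ‖b (k+2)‖ := by
    refine hsum.of_nonneg_of_le (fun k => by positivity) (fun k => ?_)
    exact mul_le_mul_of_nonneg_left (le_add_of_nonneg_left (norm_nonneg _)) (by positivity)
  have hS : (∑' k : ℕ, ((k:ℝ)+2) * ‖a (k+2)‖) + (∑' k : ℕ, ((k:ℝ)+2) * ‖b (k+2)‖)
      ≤ 1 - ‖b 1‖ := by
    calc (∑' k : ℕ, ((k:ℝ)+2) * ‖a (k+2)‖) + (∑' k : ℕ, ((k:ℝ)+2) * ‖b (k+2)‖)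
        = ∑' k : ℕ, (((k:ℝ)+2) * ‖a (k+2)‖ + ((k:ℝ)+2) * ‖b (k+2)‖) :=
          (Summable.tsum_add hA2 hB2).symm
      _ = ∑' k : ℕ, ((k:ℝ)+2) * (‖a (k+2)‖ + ‖b (k+2)‖) := tsum_congr fun k => by ring
      _ ≤ 1 - ‖b 1‖ := hcoef
  have hSA0 : 0 ≤ ∑' k : ℕ, ((k:ℝ)+2) * ‖a (k+2)‖ :=
    tsum_nonneg fun k => by positivity
  have hSB0 : 0 ≤ ∑' k : ℕ, ((k:ℝ)+2) * ‖b (k+2)‖ :=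
    tsum_nonneg fun k => by positivity
  have hBsum1 : Summable fun k : ℕ => ((k:ℝ)+1) * ‖b (k+1)‖ := summable_shift b hB2
  have hnc1 : ∀ k : ℕ, ‖((k:ℂ)+1)‖ = (k:ℝ)+1 := by
    intro k
    rw [show ((k:ℂ)+1) = ((k+1:ℕ):ℂ) by push_cast; ring, Complex.norm_natCast]
    push_cast; ring
  have hnc2 : ∀ k : ℕ, ‖((k:ℂ)+1+1)‖ = (k:ℝ)+2 := by
    intro k
    rw [show ((k:ℂ)+1+1) = ((k+2:ℕ):ℂ) by push_cast; ring, Complex.norm_natCast]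
    push_cast; ring
  constructor
  · -- injectivity
    intro z1 hz1 z2 hz2 heq
    rw [mem_ball_zero_iff] at hz1 hz2
    by_contra hne
    simp only at heq
    have hM1 : max ‖z1‖ ‖z2‖ < 1 := max_lt hz1 hz2
    have hM0 : (0:ℝ) ≤ max ‖z1‖ ‖z2‖ := le_trans (norm_nonneg _) (le_max_left _ _)
    have hd : 0 < ‖z1 - z2‖ := by
      rw [norm_pos_iff, sub_ne_zero]; exact hne
    have hA0 : Summable fun k : ℕ => ‖a (k+2)‖ := by
      refine hA2.of_nonneg_of_le (fun k => norm_nonneg _) (fun k => ?_)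
      nlinarith [norm_nonneg (a (k+2)), Nat.cast_nonneg (α := ℝ) k]
    have hB0 : Summable fun k : ℕ => ‖b (k+1)‖ := by
      refine hBsum1.of_nonneg_of_le (fun k => norm_nonneg _) (fun k => ?_)
      nlinarith [norm_nonneg (b (k+1)), Nat.cast_nonneg (α := ℝ) k]
    have hsa : ∀ z : ℂ, ‖z‖ < 1 → Summable fun k : ℕ => a (k+2) * z^(k+2) := by
      intro z hz
      refine Summable.of_norm_bounded hA0 fun k => ?_
      rw [norm_mul, norm_pow]
      exact mul_le_of_le_one_right (norm_nonneg _) (pow_le_one₀ (norm_nonneg _) hz.le)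
    have hsb : ∀ z : ℂ, ‖z‖ < 1 → Summable fun k : ℕ => b (k+1) * z^(k+1) := by
      intro z hz
      refine Summable.of_norm_bounded hB0 fun k => ?_
      rw [norm_mul, norm_pow]
      exact mul_le_of_le_one_right (norm_nonneg _) (pow_le_one₀ (norm_nonneg _) hz.le)
    have hTa : (∑' k : ℕ, a (k+2) * z1^(k+2)) - (∑' k : ℕ, a (k+2) * z2^(k+2))
        = ∑' k : ℕ, a (k+2) * (z1^(k+2) - z2^(k+2)) := by
      rw [← Summable.tsum_sub (hsa z1 hz1) (hsa z2 hz2)]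
      exact tsum_congr fun k => (mul_sub _ _ _).symm
    have hTb : (∑' k : ℕ, b (k+1) * z1^(k+1)) - (∑' k : ℕ, b (k+1) * z2^(k+1))
        = ∑' k : ℕ, b (k+1) * (z1^(k+1) - z2^(k+1)) := by
      rw [← Summable.tsum_sub (hsb z1 hz1) (hsb z2 hz2)]
      exact tsum_congr fun k => (mul_sub _ _ _).symm
    have hkey : z2 - z1 = (∑' k : ℕ, a (k+2) * (z1^(k+2) - z2^(k+2)))
        + starRingEnd ℂ (∑' k : ℕ, b (k+1) * (z1^(k+1) - z2^(k+1))) := by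
      rw [← hTa, ← hTb, map_sub]
      linear_combination -heq
    have hnorm : ‖z1 - z2‖ ≤ ‖∑' k : ℕ, a (k+2) * (z1^(k+2) - z2^(k+2))‖
        + ‖∑' k : ℕ, b (k+1) * (z1^(k+1) - z2^(k+1))‖ := by
      calc ‖z1 - z2‖ = ‖z2 - z1‖ := (norm_sub_rev _ _)
        _ ≤ _ := by rw [hkey]; exact (norm_add_le _ _).trans (by rw [RCLike.norm_conj])
    -- bound the a-part
    have hu2 : Summable fun k : ℕ =>
        ((k:ℝ)+2) * ‖a (k+2)‖ * (max ‖z1‖ ‖z2‖)^(k+1) * ‖z1 - z2‖ := by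
      refine Summable.of_nonneg_of_le (fun k => by positivity) (fun k => ?_)
        (hA2.mul_right ‖z1 - z2‖)
      have h1 : (max ‖z1‖ ‖z2‖)^(k+1) ≤ 1 := pow_le_one₀ hM0 hM1.le
      have h3 : 0 ≤ ((k:ℝ)+2) * ‖a (k+2)‖ := by positivity
      nlinarith [hd.le, mul_le_mul_of_nonneg_left h1 (mul_nonneg h3 hd.le)]
    have hP : ‖∑' k : ℕ, a (k+2) * (z1^(k+2) - z2^(k+2))‖
        ≤ ∑' k : ℕ, ((k:ℝ)+2) * ‖a (k+2)‖ * (max ‖z1‖ ‖z2‖)^(k+1) * ‖z1 - z2‖ := by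
      refine tsum_of_norm_bounded hu2.hasSum fun k => ?_
      rw [norm_mul]
      have hp : ‖z1^(k+2) - z2^(k+2)‖
          ≤ ((k:ℝ)+2) * (max ‖z1‖ ‖z2‖)^(k+1) * ‖z1 - z2‖ := by
        have hp0 := pow_diff_bound z1 z2 (k+1)
        have he : ((k+1:ℕ):ℝ)+1 = (k:ℝ)+2 := by push_cast; ring
        rw [he] at hp0
        exact hp0
      calc ‖a (k+2)‖ * ‖z1^(k+2) - z2^(k+2)‖
          ≤ ‖a (k+2)‖ * (((k:ℝ)+2) * (max ‖z1‖ ‖z2‖)^(k+1) * ‖z1 - z2‖) :=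
            mul_le_mul_of_nonneg_left hp (norm_nonneg _)
        _ = ((k:ℝ)+2) * ‖a (k+2)‖ * (max ‖z1‖ ‖z2‖)^(k+1) * ‖z1 - z2‖ := by ring
    have hP2 : ∑' k : ℕ, ((k:ℝ)+2) * ‖a (k+2)‖ * (max ‖z1‖ ‖z2‖)^(k+1) * ‖z1 - z2‖
        ≤ (max ‖z1‖ ‖z2‖ * ∑' k : ℕ, ((k:ℝ)+2) * ‖a (k+2)‖) * ‖z1 - z2‖ := by
      rw [tsum_mul_right]
      exact mul_le_mul_of_nonneg_right
        (tsum_shift_bound _ hA2 (fun k => norm_nonneg _) hM0 hM1.le) hd.le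
    -- bound the b-part
    have hv2 : Summable fun k : ℕ =>
        ((k:ℝ)+1) * ‖b (k+1)‖ * (max ‖z1‖ ‖z2‖)^k * ‖z1 - z2‖ := by
      refine Summable.of_nonneg_of_le (fun k => by positivity) (fun k => ?_)
        (hBsum1.mul_right ‖z1 - z2‖)
      have h1 : (max ‖z1‖ ‖z2‖)^k ≤ 1 := pow_le_one₀ hM0 hM1.le
      have h3 : 0 ≤ ((k:ℝ)+1) * ‖b (k+1)‖ := by positivity
      nlinarith [hd.le, mul_le_mul_of_nonneg_left h1 (mul_nonneg h3 hd.le)]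
    have hQ : ‖∑' k : ℕ, b (k+1) * (z1^(k+1) - z2^(k+1))‖
        ≤ ∑' k : ℕ, ((k:ℝ)+1) * ‖b (k+1)‖ * (max ‖z1‖ ‖z2‖)^k * ‖z1 - z2‖ := by
      refine tsum_of_norm_bounded hv2.hasSum fun k => ?_
      rw [norm_mul]
      have hp := pow_diff_bound z1 z2 k
      calc ‖b (k+1)‖ * ‖z1^(k+1) - z2^(k+1)‖
          ≤ ‖b (k+1)‖ * (((k:ℝ)+1) * (max ‖z1‖ ‖z2‖)^k * ‖z1 - z2‖) :=
            mul_le_mul_of_nonneg_left hp (norm_nonneg _)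
        _ = ((k:ℝ)+1) * ‖b (k+1)‖ * (max ‖z1‖ ‖z2‖)^k * ‖z1 - z2‖ := by ring
    have hQ2 : ∑' k : ℕ, ((k:ℝ)+1) * ‖b (k+1)‖ * (max ‖z1‖ ‖z2‖)^k * ‖z1 - z2‖
        ≤ (‖b 1‖ + max ‖z1‖ ‖z2‖ * ∑' k : ℕ, ((k:ℝ)+2) * ‖b (k+2)‖) * ‖z1 - z2‖ := by
      rw [tsum_mul_right]
      exact mul_le_mul_of_nonneg_right (est_b b hB2 hM0 hM1.le) hd.le
    -- combine
    have hC : max ‖z1‖ ‖z2‖ * ∑' k : ℕ, ((k:ℝ)+2) * ‖a (k+2)‖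
        + (‖b 1‖ + max ‖z1‖ ‖z2‖ * ∑' k : ℕ, ((k:ℝ)+2) * ‖b (k+2)‖) < 1 := by
      have h1 : max ‖z1‖ ‖z2‖ * ((∑' k : ℕ, ((k:ℝ)+2) * ‖a (k+2)‖)
          + ∑' k : ℕ, ((k:ℝ)+2) * ‖b (k+2)‖) ≤ max ‖z1‖ ‖z2‖ * (1 - ‖b 1‖) :=
        mul_le_mul_of_nonneg_left hS hM0
      have h2 : max ‖z1‖ ‖z2‖ * (1 - ‖b 1‖) < 1 * (1 - ‖b 1‖) :=
        mul_lt_mul_of_pos_right hM1 (by linarith)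
      nlinarith
    have hfinal : ‖z1 - z2‖ ≤ (max ‖z1‖ ‖z2‖ * ∑' k : ℕ, ((k:ℝ)+2) * ‖a (k+2)‖
        + (‖b 1‖ + max ‖z1‖ ‖z2‖ * ∑' k : ℕ, ((k:ℝ)+2) * ‖b (k+2)‖)) * ‖z1 - z2‖ := by
      nlinarith [hnorm, hP.trans hP2, hQ.trans hQ2]
    nlinarith [mul_lt_mul_of_pos_right hC hd]
  · -- sense-preserving
    intro z hzb
    rw [mem_ball_zero_iff] at hzb
    have hgd := aux_hasDerivAt (fun k => b (k+1)) 0 (by simpa using hBsum1) hzb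
    simp only [Nat.cast_zero, add_zero, Nat.add_zero] at hgd
    have hA2' : Summable fun k : ℕ => ((k:ℝ)+(1:ℕ)+1) * ‖a (k+2)‖ :=
      hA2.congr fun k => by push_cast; ring
    have hta := aux_hasDerivAt (fun k => a (k+2)) 1 (hA2'.congr fun k => by push_cast; ring) hzb
    simp only [Nat.cast_one, show ∀ k : ℕ, k+1+1 = k+2 from fun _ => rfl] at hta
    have hhd := (hasDerivAt_id' z).fun_add hta
    rw [hgd.deriv, hhd.deriv]
    -- LHS bound
    have hv : Summable fun k : ℕ => ((k:ℝ)+1) * ‖b (k+1)‖ * ‖z‖^k := by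
      refine Summable.of_nonneg_of_le (fun k => by positivity) (fun k => ?_) hBsum1
      have h1 : ‖z‖^k ≤ 1 := pow_le_one₀ (norm_nonneg _) hzb.le
      have h3 : 0 ≤ ((k:ℝ)+1) * ‖b (k+1)‖ := by positivity
      nlinarith
    have hL : ‖∑' k : ℕ, ((k:ℂ)+1) * b (k+1) * z^k‖
        ≤ ∑' k : ℕ, ((k:ℝ)+1) * ‖b (k+1)‖ * ‖z‖^k := by
      refine tsum_of_norm_bounded hv.hasSum fun k => ?_
      rw [norm_mul, norm_mul, hnc1, norm_pow]
    have hL2 := est_b b hB2 (norm_nonneg z) hzb.le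
    -- RHS bound
    have hu : Summable fun k : ℕ => ((k:ℝ)+2) * ‖a (k+2)‖ * ‖z‖^(k+1) := by
      refine Summable.of_nonneg_of_le (fun k => by positivity) (fun k => ?_) hA2
      have h1 : ‖z‖^(k+1) ≤ 1 := pow_le_one₀ (norm_nonneg _) hzb.le
      have h3 : 0 ≤ ((k:ℝ)+2) * ‖a (k+2)‖ := by positivity
      nlinarith
    have hDa : ‖∑' k : ℕ, ((k:ℂ)+1+1) * a (k+2) * z^(k+1)‖
        ≤ ∑' k : ℕ, ((k:ℝ)+2) * ‖a (k+2)‖ * ‖z‖^(k+1) := by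
      refine tsum_of_norm_bounded hu.hasSum fun k => ?_
      rw [norm_mul, norm_mul, hnc2, norm_pow]
    have hDa2 : ∑' k : ℕ, ((k:ℝ)+2) * ‖a (k+2)‖ * ‖z‖^(k+1)
        ≤ ‖z‖ * ∑' k : ℕ, ((k:ℝ)+2) * ‖a (k+2)‖ :=
      tsum_shift_bound _ hA2 (fun k => norm_nonneg _) (norm_nonneg z) hzb.le
    have hR : (1:ℝ) - ‖∑' k : ℕ, ((k:ℂ)+1+1) * a (k+2) * z^(k+1)‖
        ≤ ‖1 + ∑' k : ℕ, ((k:ℂ)+1+1) * a (k+2) * z^(k+1)‖ := by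
      have h := norm_sub_norm_le (1:ℂ) (-(∑' k : ℕ, ((k:ℂ)+1+1) * a (k+2) * z^(k+1)))
      simpa [sub_neg_eq_add] using h
    have hkey : ‖z‖ * ((∑' k : ℕ, ((k:ℝ)+2) * ‖a (k+2)‖)
        + ∑' k : ℕ, ((k:ℝ)+2) * ‖b (k+2)‖) < 1 - ‖b 1‖ := by
      calc ‖z‖ * ((∑' k : ℕ, ((k:ℝ)+2) * ‖a (k+2)‖) + ∑' k : ℕ, ((k:ℝ)+2) * ‖b (k+2)‖)
          ≤ ‖z‖ * (1 - ‖b 1‖) := mul_le_mul_of_nonneg_left hS (norm_nonneg z)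
        _ < 1 * (1 - ‖b 1‖) := mul_lt_mul_of_pos_right hzb (by linarith)
        _ = 1 - ‖b 1‖ := one_mul _
    nlinarith [hL, hL2, hDa, hDa2, hR, hkey]
end

section
/- Let λ ∈ (0,1] and let (n_p)_{p≥1} be a strictly increasing sequence of nonnegative integers with liminf_{p→∞} n_p/n_{p+1} = λ. Suppose the coefficients (c_m) of a power series satisfy, for p ≥ 2 and 2 ≤ k ≤ n_{p+1} − n_p + 1, the bound |c_{n_p+k}| ≤ C · k² k! / (n_p+k)! · Π_{j=1}^{p−1} (n_{j+1} − n_j + 1)² (n_{j+1} − n_j + 1)! for a constant C. If λ = 1, then limsup_m |c_m|^{1/m} = 0, i.e., the series Σ c_m z^m has infinite radius of convergence. -/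
open Filter

lemma my_sum_Ioc_tsub (f : ℕ → ℕ) (hf : Monotone f) :
    ∀ b a, a ≤ b → ∑ j ∈ Finset.Ioc a b, (f (j+1) - f j) = f (b+1) - f (a+1) := by
  intro b
  induction b with
  | zero => intro a ha; interval_cases a; simp
  | succ b ih =>
    intro a ha
    rcases Nat.eq_or_lt_of_le ha with rfl | h
    · simp
    · have hab : a ≤ b := by omega
      rw [Finset.sum_Ioc_succ_top hab, ih a hab]
      have h1 : f (a+1) ≤ f (b+1) := hf (by omega)
      have h2 : f (b+1) ≤ f (b+1+1) := hf (by omega)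
      omega

lemma my_sq_le (d : ℕ) : (d+1)^2 ≤ 4^d := by
  have h : d + 1 ≤ 2^d := (Nat.lt_two_pow_self (n := d))
  calc (d+1)^2 ≤ (2^d)^2 := Nat.pow_le_pow_left h 2
    _ = 4^d := by rw [← Nat.pow_mul, Nat.mul_comm, Nat.pow_mul]

lemma my_sq_le' (k : ℕ) : k^2 ≤ 4^k := le_trans (Nat.pow_le_pow_left (by omega) 2) (my_sq_le k)

lemma my_fact_le (d : ℕ) : (d+1).factorial ≤ 2^d * d^d := by
  rw [Nat.factorial_succ]
  exact Nat.mul_le_mul ((Nat.lt_two_pow_self (n := d))) (Nat.factorial_le_pow d)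

lemma my_fact_lb (m : ℕ) : (m:ℝ)^m ≤ m.factorial * Real.exp 1 ^ m := by
  have h1 : (m:ℝ)^m / m.factorial ≤ Real.exp m := by
    calc (m:ℝ)^m / m.factorial
        ≤ ∑ i ∈ Finset.range (m+1), (m:ℝ)^i / i.factorial :=
          Finset.single_le_sum (f := fun i => (m:ℝ)^i / i.factorial)
            (fun i _ => by positivity) (Finset.self_mem_range_succ m)
      _ ≤ Real.exp m := Real.sum_le_exp_of_nonneg (by positivity) _
  have h2 : Real.exp (m:ℝ) = Real.exp 1 ^ m := by rw [← Real.exp_nat_mul, mul_one]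
  have h3 : (0:ℝ) < m.factorial := by exact_mod_cast m.factorial_pos
  rw [div_le_iff₀ h3] at h1
  rw [h2] at h1
  linarith

set_option maxHeartbeats 2000000 in
lemma my_key (np : ℕ → ℕ) (hmono : StrictMono np)
    (c : ℕ → ℂ) (C : ℝ) (hC : 0 < C)
    (hbound : ∀ p : ℕ, 2 ≤ p → ∀ k : ℕ, 2 ≤ k → k ≤ np (p + 1) - np p + 1 →
      ‖c (np p + k)‖ ≤
        C * (k : ℝ) ^ 2 * k.factorial / (np p + k).factorial *
          ∏ j ∈ Finset.Icc 1 (p - 1),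
            (((np (j + 1) - np j + 1 : ℕ) : ℝ) ^ 2 *
              ((np (j + 1) - np j + 1).factorial : ℝ)))
    (ε : ℝ) (hε0 : 0 < ε) (hε2 : ε ≤ 1/2) (J : ℕ) (hJ2 : 2 ≤ J)
    (hgap : ∀ j, J ≤ j → ((np (j+1) - np j : ℕ) : ℝ) ≤ ε * np (j+1))
    (m : ℕ) (hm1 : np J + 2 ≤ m) (hm2 : 1 ≤ ε * m) :
    ‖c m‖ ≤
      C * (∏ j ∈ Finset.Icc 1 (J-1),
            (((np (j + 1) - np j + 1 : ℕ) : ℝ) ^ 2 *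
              ((np (j + 1) - np j + 1).factorial : ℝ))) *
        (12 * ε * Real.exp 1) ^ m := by
  classical
  have hmcast : (0:ℝ) ≤ (m:ℝ) := Nat.cast_nonneg m
  have hεm : (0:ℝ) ≤ ε * m := by positivity
  set F : ℕ → ℝ := fun j => (((np (j + 1) - np j + 1 : ℕ) : ℝ) ^ 2 *
      ((np (j + 1) - np j + 1).factorial : ℝ)) with hF
  have hFpos : ∀ j, 0 < F j := fun j => by
    rw [hF]
    have := (np (j+1) - np j + 1).factorial_pos
    positivity
  set A : ℝ := ∏ j ∈ Finset.Icc 1 (J-1), F j with hA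
  clear_value F
  have hA0 : 0 ≤ A := by
    rw [hA]; exact Finset.prod_nonneg (fun j _ => (hFpos j).le)
  clear_value A
  have hJnp : J ≤ np J := hmono.le_apply
  have hJm : J ≤ m := by omega
  obtain ⟨p, hJp, hPp, hub⟩ : ∃ p, J ≤ p ∧ np p + 2 ≤ m ∧ m ≤ np (p+1) + 1 := by
    refine ⟨Nat.findGreatest (fun q => np q + 2 ≤ m) m, Nat.le_findGreatest hJm hm1,
      Nat.findGreatest_spec (P := fun q => np q + 2 ≤ m) (m := J) (n := m) hJm hm1, ?_⟩
    by_contra h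
    push_neg at h
    have hfg : Nat.findGreatest (fun q => np q + 2 ≤ m) m ≤
        np (Nat.findGreatest (fun q => np q + 2 ≤ m) m) := hmono.le_apply
    have hsp : np (Nat.findGreatest (fun q => np q + 2 ≤ m) m) + 2 ≤ m :=
      Nat.findGreatest_spec (P := fun q => np q + 2 ≤ m) (m := J) (n := m) hJm hm1
    exact Nat.findGreatest_is_greatest (P := fun q => np q + 2 ≤ m) (n := m)
      (k := Nat.findGreatest (fun q => np q + 2 ≤ m) m + 1)
      (Nat.lt_succ_self _) (by omega) (by omega)
  have hnpm : np p ≤ np (p+1) := (hmono (by omega : p < p + 1)).le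
  obtain ⟨k, hk2, hmk, hkle⟩ : ∃ k, 2 ≤ k ∧ np p + k = m ∧ k ≤ np (p+1) - np p + 1 :=
    ⟨m - np p, by omega, by omega, by omega⟩
  have hb := hbound p (le_trans hJ2 hJp) k hk2 hkle
  rw [hmk] at hb
  have hnppm : (np p : ℝ) ≤ m := by exact_mod_cast (by omega : np p ≤ m)
  set B : ℝ := 12 * ε * m with hB
  clear_value B
  have hB1 : (1:ℝ) ≤ B := by rw [hB]; nlinarith [hm2]
  have hB0 : (0:ℝ) ≤ B := by linarith
  -- bound on k
  have hkR : (k:ℝ) ≤ 3 * ε * m := by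
    have hd := hgap p hJp
    have hcast : ((np (p+1) - np p : ℕ) : ℝ) = (np (p+1) : ℝ) - np p :=
      Nat.cast_sub hnpm
    rw [hcast] at hd
    have hkd : (k:ℝ) ≤ ((np (p+1):ℝ) - np p) + 1 := by
      have h' := (Nat.cast_le (α := ℝ)).2 hkle
      push_cast at h'
      rw [hcast] at h'
      linarith
    nlinarith [hd, hkd]
  -- k-part bound
  have hkpart : (k:ℝ)^2 * k.factorial ≤ B ^ k := by
    have h1 : (k:ℝ)^2 ≤ (4:ℝ)^k := by exact_mod_cast my_sq_le' k
    have h2 : (k.factorial : ℝ) ≤ (k:ℝ)^k := by exact_mod_cast Nat.factorial_le_pow k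
    have h3 : (k:ℝ)^k ≤ (3*ε*(m:ℝ))^k := pow_le_pow_left₀ (by positivity) hkR k
    calc (k:ℝ)^2 * k.factorial ≤ (4:ℝ)^k * (3*ε*(m:ℝ))^k := by
          apply mul_le_mul h1 (le_trans h2 h3) (by positivity) (by positivity)
      _ = (4 * (3*ε*(m:ℝ)))^k := by rw [← mul_pow]
      _ ≤ B ^ k := by
          refine pow_le_pow_left₀ (by positivity) ?_ k
          rw [hB]; nlinarith [hεm]
  -- tail bound
  have htail : (∏ j ∈ Finset.Ioc (J-1) (p-1), F j) ≤ B ^ (np p - np J) := by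
    have hstep : ∀ j ∈ Finset.Ioc (J-1) (p-1), F j ≤ B ^ (np (j+1) - np j) := by
      intro j hj
      rw [Finset.mem_Ioc] at hj
      have hJj : J ≤ j := by omega
      have hj1p : j + 1 ≤ p := by omega
      have hgapj := hgap j hJj
      have hd1 : 1 ≤ np (j+1) - np j := by
        have := hmono (by omega : j < j + 1); omega
      have hle : np (j+1) ≤ m := by
        have := hmono.monotone hj1p
        omega
      obtain ⟨d, hd⟩ : ∃ d, np (j+1) - np j = d := ⟨_, rfl⟩
      rw [hd] at hgapj hd1 ⊢
      have hdm : (d:ℝ) ≤ ε * m := by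
        refine le_trans hgapj ?_
        have hleR : ((np (j+1)):ℝ) ≤ m := by exact_mod_cast hle
        nlinarith
      have h1 : ((d+1:ℕ):ℝ)^2 ≤ (4:ℝ)^d := by exact_mod_cast my_sq_le d
      have h2 : ((d+1).factorial : ℝ) ≤ (2:ℝ)^d * (d:ℝ)^d := by exact_mod_cast my_fact_le d
      have h3 : (d:ℝ)^d ≤ (ε*(m:ℝ))^d := pow_le_pow_left₀ (by positivity) hdm d
      have h4 : (2:ℝ)^d * (d:ℝ)^d ≤ (2:ℝ)^d * (ε*(m:ℝ))^d :=
        mul_le_mul_of_nonneg_left h3 (by positivity)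
      calc F j = ((d+1:ℕ):ℝ)^2 * ((d+1).factorial : ℝ) := by rw [hF, ← hd]
        _ ≤ (4:ℝ)^d * ((2:ℝ)^d * (ε*(m:ℝ))^d) :=
            mul_le_mul h1 (le_trans h2 h4) (by positivity) (by positivity)
        _ = (4 * (2 * (ε*(m:ℝ))))^d := by rw [mul_pow, mul_pow]; ring
        _ ≤ B ^ d := by
            refine pow_le_pow_left₀ (by positivity) ?_ d
            rw [hB]; nlinarith [hεm]
    calc (∏ j ∈ Finset.Ioc (J-1) (p-1), F j)
        ≤ ∏ j ∈ Finset.Ioc (J-1) (p-1), B ^ (np (j+1) - np j) :=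
          Finset.prod_le_prod (fun j _ => (hFpos j).le) hstep
      _ = B ^ (∑ j ∈ Finset.Ioc (J-1) (p-1), (np (j+1) - np j)) :=
          (Finset.prod_pow_eq_pow_sum _ _ _)
      _ = B ^ (np p - np J) := by
          have hs := my_sum_Ioc_tsub np hmono.monotone (p-1) (J-1) (by omega)
          rw [show p-1+1 = p by omega, show J-1+1 = J by omega] at hs
          rw [hs]
  -- split the product
  have hsplit : (∏ j ∈ Finset.Icc 1 (p-1), F j)
      = A * ∏ j ∈ Finset.Ioc (J-1) (p-1), F j := by
    rw [hA, show Finset.Icc 1 (p-1) = Finset.Ioc 0 (p-1) from Finset.Icc_add_one_left_eq_Ioc 0 (p-1),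
      show Finset.Icc 1 (J-1) = Finset.Ioc 0 (J-1) from Finset.Icc_add_one_left_eq_Ioc 0 (J-1)]
    exact (Finset.prod_Ioc_consecutive F (by omega) (by omega)).symm
  have hfac0 : (0:ℝ) < m.factorial := by exact_mod_cast m.factorial_pos
  have htail0 : 0 ≤ ∏ j ∈ Finset.Ioc (J-1) (p-1), F j :=
    Finset.prod_nonneg (fun j _ => (hFpos j).le)
  have hCA : 0 ≤ C * A := mul_nonneg hC.le hA0
  have hC0 : 0 ≤ C := hC.le
  calc ‖c m‖
      ≤ C * (k : ℝ) ^ 2 * k.factorial / m.factorial * ∏ j ∈ Finset.Icc 1 (p-1), F j := hb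
    _ = C * ((k:ℝ)^2 * k.factorial) * (A * ∏ j ∈ Finset.Ioc (J-1) (p-1), F j) / m.factorial := by
        rw [hsplit]; ring
    _ ≤ C * B^k * (A * B ^ (np p - np J)) / m.factorial := by gcongr
    _ = C * A * B ^ (k + (np p - np J)) / m.factorial := by rw [pow_add]; ring
    _ ≤ C * A * B ^ m / m.factorial := by
        have hexp : k + (np p - np J) ≤ m := by omega
        gcongr
    _ ≤ C * A * (12 * ε * Real.exp 1) ^ m := by
        rw [div_le_iff₀ hfac0]
        have h1 : B ^ m = (12*ε)^m * (m:ℝ)^m := by rw [hB, ← mul_pow]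
        have h2 : (m:ℝ)^m ≤ (m.factorial : ℝ) * Real.exp 1 ^ m := my_fact_lb m
        calc C * A * B ^ m = C * A * ((12*ε)^m * (m:ℝ)^m) := by rw [h1]
          _ ≤ C * A * ((12*ε)^m * ((m.factorial : ℝ) * Real.exp 1 ^ m)) := by gcongr
          _ = C * A * (12 * ε * Real.exp 1) ^ m * m.factorial := by
              rw [mul_pow, mul_pow]; ring

set_option maxHeartbeats 1000000 in
theorem entire_of_liminf_one (np : ℕ → ℕ) (hmono : StrictMono np)
    (hlam : liminf (fun p : ℕ => (np p : ℝ) / np (p + 1)) atTop = 1)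
    (c : ℕ → ℂ) (C : ℝ) (hC : 0 < C)
    (hbound : ∀ p : ℕ, 2 ≤ p → ∀ k : ℕ, 2 ≤ k → k ≤ np (p + 1) - np p + 1 →
      ‖c (np p + k)‖ ≤
        C * (k : ℝ) ^ 2 * k.factorial / (np p + k).factorial *
          ∏ j ∈ Finset.Icc 1 (p - 1),
            (((np (j + 1) - np j + 1 : ℕ) : ℝ) ^ 2 *
              ((np (j + 1) - np j + 1).factorial : ℝ))) :
    limsup (fun m : ℕ => ‖c m‖ ^ (1 / (m : ℝ))) atTop = 0 := by
  have key : ∀ δ : ℝ, 0 < δ → ∀ᶠ m : ℕ in atTop,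
      ‖c m‖ ^ (1 / (m : ℝ)) < δ := by
    intro δ hδ
    have hδ'0 : 0 < min δ 1 / 2 := by positivity
    have hδ'δ : min δ 1 / 2 < δ := by
      have h1 : min δ 1 ≤ δ := min_le_left _ _
      linarith
    have hδ'1 : min δ 1 / 2 ≤ 1/2 := by
      have := min_le_right δ 1; linarith
    have hKpos : (0:ℝ) < 12 * Real.exp 1 := by positivity
    set ε : ℝ := min ((min δ 1 / 2) / (2 * (12 * Real.exp 1))) (1/2) with hεdef
    have hε0 : 0 < ε := by rw [hεdef]; positivity
    have hε2 : ε ≤ 1/2 := min_le_right _ _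
    have hKε : 12 * ε * Real.exp 1 ≤ (min δ 1 / 2) / 2 := by
      have h1 : ε ≤ (min δ 1 / 2) / (2 * (12 * Real.exp 1)) := min_le_left _ _
      have h2 : 12 * ε * Real.exp 1 = (12 * Real.exp 1) * ε := by ring
      rw [h2]
      calc (12 * Real.exp 1) * ε
          ≤ (12 * Real.exp 1) * ((min δ 1 / 2) / (2 * (12 * Real.exp 1))) :=
            mul_le_mul_of_nonneg_left h1 hKpos.le
        _ = (min δ 1 / 2) / 2 := by field_simp
    have hbdd : IsBoundedUnder (· ≥ ·) atTop (fun p : ℕ => (np p : ℝ) / np (p + 1)) :=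
      isBoundedUnder_of ⟨0, fun p => by positivity⟩
    have hlt : ∀ᶠ j in atTop, (1 - ε : ℝ) < np j / np (j+1) :=
      eventually_lt_of_lt_liminf (by rw [hlam]; linarith) hbdd
    rw [eventually_atTop] at hlt
    obtain ⟨J₀, hJ₀⟩ := hlt
    have hJ2 : 2 ≤ max J₀ 2 := le_max_right _ _
    have hgap : ∀ j, max J₀ 2 ≤ j → ((np (j+1) - np j : ℕ) : ℝ) ≤ ε * np (j+1) := by
      intro j hj
      have h1 := hJ₀ j (le_trans (le_max_left _ _) hj)
      have hjle : j + 1 ≤ np (j+1) := hmono.le_apply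
      have hjp : (0:ℝ) < np (j+1) := by
        have : 0 < np (j+1) := by omega
        exact_mod_cast this
      have hmle : np j ≤ np (j+1) := (hmono (by omega : j < j + 1)).le
      rw [Nat.cast_sub hmle]
      have h2 : (1 - ε) * np (j+1) < np j := (lt_div_iff₀ hjp).1 h1
      nlinarith
    have hev2 : ∀ᶠ m : ℕ in atTop, 1 ≤ ε * m := by
      have h := tendsto_natCast_atTop_atTop (R := ℝ)
      exact (h.const_mul_atTop hε0).eventually_ge_atTop 1
    have hev3 : ∀ᶠ m : ℕ in atTop,
        C * (∏ j ∈ Finset.Icc 1 (max J₀ 2 - 1),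
            (((np (j + 1) - np j + 1 : ℕ) : ℝ) ^ 2 *
              ((np (j + 1) - np j + 1).factorial : ℝ))) ≤ 2^m := by
      exact (tendsto_pow_atTop_atTop_of_one_lt (by norm_num : (1:ℝ) < 2)).eventually_ge_atTop _
    filter_upwards [eventually_ge_atTop (np (max J₀ 2) + 2), hev2, hev3,
      eventually_ge_atTop 1] with m h1 h2 h3 h4
    have hkey := my_key np hmono c C hC hbound ε hε0 hε2 (max J₀ 2) hJ2 hgap m h1 h2
    have hb2 : ‖c m‖ ≤ (min δ 1 / 2) ^ m := by
      calc ‖c m‖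
          ≤ C * (∏ j ∈ Finset.Icc 1 (max J₀ 2 - 1),
              (((np (j + 1) - np j + 1 : ℕ) : ℝ) ^ 2 *
                ((np (j + 1) - np j + 1).factorial : ℝ))) *
            (12 * ε * Real.exp 1) ^ m := hkey
        _ ≤ 2^m * ((min δ 1 / 2) / 2) ^ m := by
            apply mul_le_mul h3 (pow_le_pow_left₀ (by positivity) hKε m) (by positivity)
              (by positivity)
        _ = (min δ 1 / 2) ^ m := by rw [← mul_pow]; ring_nf
    have habs0 : (0:ℝ) ≤ ‖c m‖ := norm_nonneg _
    have hfin : ‖c m‖ ^ (1 / (m:ℝ)) ≤ min δ 1 / 2 := by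
      have hmne : (m:ℝ) ≠ 0 := Nat.cast_ne_zero.2 (by omega)
      calc ‖c m‖ ^ (1 / (m:ℝ))
          ≤ ((min δ 1 / 2) ^ m) ^ (1 / (m:ℝ)) :=
            Real.rpow_le_rpow habs0 hb2 (by positivity)
        _ = min δ 1 / 2 := by
            rw [← Real.rpow_natCast (min δ 1 / 2) m, ← Real.rpow_mul hδ'0.le,
              mul_one_div, div_self hmne, Real.rpow_one]
    exact lt_of_le_of_lt hfin hδ'δ
  have htend : Tendsto (fun m : ℕ => ‖c m‖ ^ (1 / (m : ℝ))) atTop (nhds 0) := by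
    refine tendsto_order.2 ⟨?_, ?_⟩
    · intro a ha
      exact Eventually.of_forall fun m =>
        lt_of_lt_of_le ha (Real.rpow_nonneg (norm_nonneg _) _)
    · intro a ha
      exact key a ha
  exact htend.limsup_eq
end

section
/- Let f(z) = Σ_{k≥0} a_k z^k + conj(Σ_{k≥1} b_k z^k) be harmonic in 𝔻 with max{limsup_m |a_m|^{1/m}, limsup_m |b_m|^{1/m}} ≤ 1, and let (n_p) be a strictly increasing sequence of nonnegative integers whose normalized derivatives lie in S_H^c (so the coefficient bounds |a_{n_p+k}| ≤ ((2k²+1)/3) · k!(n_p+1)!/(n_p+k)! · |a_{n_p+1}| hold for all p, k ≥ 2, and similarly for b). If n_{p+2} − 2n_{p+1} + n_p = o(n_p), then both power series Σ a_k z^k and Σ b_k z^k have infinite radius of convergence, i.e., f is a harmonic entire mapping. -/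
open Filter


/-- If gaps d p = n(p+1)-n p ≥ 1, n p ≥ p, and (d(p+1)-d p)/n p → 0, then d p / n p → 0. -/
lemma ratio_to_zero (n : ℕ → ℝ) (hd1 : ∀ p, 1 ≤ n (p+1) - n p) (hnp : ∀ p : ℕ, (p:ℝ) ≤ n p)
    (he : Tendsto (fun p => ((n (p+2) - n (p+1)) - (n (p+1) - n p)) / n p) atTop (nhds 0)) :
    Tendsto (fun p => (n (p+1) - n p) / n p) atTop (nhds 0) := by
  set d : ℕ → ℝ := fun p => n (p+1) - n p with hdd
  set r : ℕ → ℝ := fun p => d p / n p with hrr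
  have hnpos : ∀ p : ℕ, 1 ≤ p → 0 < n p := fun p hp => lt_of_lt_of_le (by exact_mod_cast hp) (hnp p)
  have hrpos : ∀ p : ℕ, 1 ≤ p → 0 < r p := fun p hp =>
    div_pos (lt_of_lt_of_le one_pos (hd1 p)) (hnpos p hp)
  -- key: ∀ δ ∈ (0,1], eventually r p ≤ δ
  have key : ∀ δ : ℝ, 0 < δ → δ ≤ 1 → ∃ Q : ℕ, ∀ p, Q ≤ p → r p ≤ δ := by
    intro δ hδ hδ1
    obtain ⟨P₀, hP₀⟩ := (Metric.tendsto_atTop.1 he) (δ^2/8) (by positivity)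
    set P := P₀ + 1 with hPdef
    have hP1 : 1 ≤ P := Nat.le_add_left 1 P₀
    have hec : ∀ p, P ≤ p → |((d (p+1) - d p) / n p)| ≤ δ^2/8 := by
      intro p hp
      have := hP₀ p (le_trans (Nat.le_succ P₀) hp)
      rw [Real.dist_eq, sub_zero] at this
      exact this.le
    -- recurrence: r (p+1) * (1 + r p) = r p + e p  where e p = (d(p+1)-d p)/n p
    have hrec : ∀ p, 1 ≤ p → r (p+1) * (1 + r p) = r p + (d (p+1) - d p) / n p := by
      intro p hp
      have h0 : (0:ℝ) < n p := hnpos p hp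
      have hdp : (1:ℝ) ≤ d p := hd1 p
      have hsum : n (p+1) = n p + d p := by simp [hdd]
      have h1 : (0:ℝ) < n p + d p := by linarith
      show d (p+1) / n (p+1) * (1 + d p / n p) = d p / n p + (d (p+1) - d p) / n p
      rw [hsum]
      field_simp
      ring
    -- cap: for p ≥ P, r (p+1) ≤ 1
    have hcap : ∀ p, P ≤ p → r (p+1) ≤ 1 := by
      intro p hp
      have h1p : 1 ≤ p := le_trans hP1 hp
      have hrp := hrpos p h1p
      have hrec' := hrec p h1p
      have he' := (abs_le.1 (hec p hp)).2
      nlinarith [hrpos (p+1) (le_trans h1p (Nat.le_succ p)), sq_nonneg δ]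
    -- stay: for p ≥ P, r p ≤ δ → r (p+1) ≤ δ
    have hstay : ∀ p, P ≤ p → r p ≤ δ → r (p+1) ≤ δ := by
      intro p hp hrδ
      have h1p : 1 ≤ p := le_trans hP1 hp
      have hrp := hrpos p h1p
      have hrec' := hrec p h1p
      have he' := (abs_le.1 (hec p hp)).2
      nlinarith [mul_nonneg (le_of_lt hδ) (le_of_lt hrp)]
    -- drop: for p ≥ P, δ < r p → r p ≤ 1 → r (p+1) ≤ r p - δ^2/4
    have hdrop : ∀ p, P ≤ p → δ < r p → r p ≤ 1 → r (p+1) ≤ r p - δ^2/4 := by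
      intro p hp hrδ hr1
      have h1p : 1 ≤ p := le_trans hP1 hp
      have hrp := hrpos p h1p
      have hrec' := hrec p h1p
      have he' := (abs_le.1 (hec p hp)).2
      nlinarith [sq_nonneg (r p - δ)]
    -- find q ≥ P+1 with r q ≤ δ
    have hq : ∃ q, P + 1 ≤ q ∧ r q ≤ δ := by
      by_contra hcon
      push_neg at hcon
      obtain ⟨i, hi⟩ := exists_nat_gt (4 / δ^2)
      have hiter : ∀ j : ℕ, r (P + 1 + j) ≤ 1 - j * (δ^2/4) := by
        intro j
        induction j with
        | zero => simpa using hcap P (le_refl P)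
        | succ j ih =>
          have h1 : δ < r (P + 1 + j) := hcon _ (Nat.le_add_right _ j)
          have h2 : r (P + 1 + j) ≤ 1 := ih.trans (by
            have : (0:ℝ) ≤ (j:ℝ) * (δ^2/4) := by positivity
            linarith)
          have := hdrop (P + 1 + j) (le_trans (Nat.le_succ P) (Nat.le_add_right _ j)) h1 h2
          have heq : P + 1 + (j+1) = (P + 1 + j) + 1 := by ring
          rw [heq]
          push_cast
          nlinarith
      have h1 : δ < r (P + 1 + i) := hcon _ (Nat.le_add_right _ i)
      have h2 := hiter i
      have : (4:ℝ) / δ^2 * δ^2 < i * δ^2 := by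
        apply mul_lt_mul_of_pos_right hi (by positivity)
      rw [div_mul_cancel₀] at this
      · nlinarith
      · positivity
    obtain ⟨q, hqP, hqδ⟩ := hq
    refine ⟨q, fun p hp => ?_⟩
    induction p with
    | zero => simpa [Nat.le_zero.1 hp] using hqδ
    | succ p ih =>
      rcases Nat.lt_or_ge q (p+1) with h | h
      · have hqp : q ≤ p := Nat.lt_succ_iff.1 h
        exact hstay p (le_trans (le_trans (Nat.le_succ P) hqP) hqp) (ih hqp)
      · have : q = p + 1 := le_antisymm hp h
        rw [← this]; exact hqδ
  -- conclude tendsto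
  rw [Metric.tendsto_atTop]
  intro ε hε
  obtain ⟨Q, hQ⟩ := key (min (ε/2) 1) (lt_min (by linarith) one_pos) (min_le_right _ _)
  refine ⟨Q + 1, fun p hp => ?_⟩
  have h1p : 1 ≤ p := le_trans (Nat.le_add_left 1 Q) hp
  have := hQ p (le_trans (Nat.le_succ Q) hp)
  rw [Real.dist_eq, sub_zero, abs_of_pos (hrpos p h1p)]
  calc r p ≤ min (ε/2) 1 := this
    _ ≤ ε/2 := min_le_left _ _
    _ < ε := by linarith

lemma fact_ge (n : ℕ) : ∀ k : ℕ, 1 ≤ k → (n+1).factorial * n^(k-1) ≤ (n+k).factorial := by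
  intro k hk
  induction k with
  | zero => omega
  | succ k ih =>
    rcases Nat.eq_or_lt_of_le hk with h | h
    · simp [← h]
    · have hk1 : 1 ≤ k := by omega
      have := ih hk1
      have hstep : (n+k).factorial * n ≤ (n + (k+1)).factorial := by
        have : n + (k+1) = (n+k) + 1 := by ring
        rw [this, Nat.factorial_succ]
        calc (n+k).factorial * n ≤ (n+k).factorial * (n+k+1) := Nat.mul_le_mul le_rfl (by omega)
          _ = (n+k+1) * (n+k).factorial := Nat.mul_comm _ _
      calc (n+1).factorial * n^(k+1-1) = ((n+1).factorial * n^(k-1)) * n := by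
            rw [mul_assoc, ← pow_succ]
            congr 2
            omega
        _ ≤ (n+k).factorial * n := Nat.mul_le_mul this le_rfl
        _ ≤ (n + (k+1)).factorial := hstep

lemma fact_le_pow : ∀ k : ℕ, 1 ≤ k → k.factorial ≤ k^(k-1) := by
  intro k hk
  induction k with
  | zero => omega
  | succ k ih =>
    rcases Nat.eq_or_lt_of_le hk with h | h
    · simp [← h]
    · have hk1 : 1 ≤ k := by omega
      calc (k+1).factorial = (k+1) * k.factorial := Nat.factorial_succ k
        _ ≤ (k+1) * k^(k-1) := Nat.mul_le_mul le_rfl (ih hk1)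
        _ ≤ (k+1) * (k+1)^(k-1) := Nat.mul_le_mul le_rfl (Nat.pow_le_pow_left (by omega) _)
        _ = (k+1)^(k-1+1) := by rw [pow_succ]; ring
        _ = (k+1)^(k+1-1) := by congr 1; omega

lemma sq_le_four_pow : ∀ k : ℕ, 2 ≤ k → k^2 ≤ 4^(k-1) := by
  intro k hk
  induction k with
  | zero => omega
  | succ k ih =>
    rcases Nat.eq_or_lt_of_le hk with h | h
    · simp [← h]
    · have hk1 : 2 ≤ k := by omega
      have := ih hk1
      have h4 : 4^(k-1) * 4 = 4^(k+1-1) := by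
        rw [← pow_succ]
        congr 1
        omega
      nlinarith

lemma arith_bound (n k : ℕ) (hn : 1 ≤ n) (hk : 2 ≤ k) :
    (2*(k:ℝ)^2+1)/3 * ((k.factorial : ℝ) * ((n+1).factorial : ℝ) / ((n+k).factorial : ℝ))
      ≤ (4*(k:ℝ)/(n:ℝ))^(k-1) := by
  have hk1 : 1 ≤ k := by omega
  have hnR : (1:ℝ) ≤ (n:ℝ) := by exact_mod_cast hn
  have hkR : (2:ℝ) ≤ (k:ℝ) := by exact_mod_cast hk
  have hfpos : (0:ℝ) < ((n+k).factorial : ℝ) := by positivity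
  have hnpow : (0:ℝ) < (n:ℝ)^(k-1) := by positivity
  have h1 : ((n+1).factorial : ℝ) * (n:ℝ)^(k-1) ≤ ((n+k).factorial : ℝ) := by
    exact_mod_cast fact_ge n k hk1
  -- step A
  have hA : (k.factorial : ℝ) * ((n+1).factorial : ℝ) / ((n+k).factorial : ℝ)
      ≤ (k.factorial : ℝ) / (n:ℝ)^(k-1) := by
    rw [div_le_div_iff₀ hfpos hnpow]
    calc (k.factorial : ℝ) * ((n+1).factorial : ℝ) * (n:ℝ)^(k-1)
        = (k.factorial : ℝ) * (((n+1).factorial : ℝ) * (n:ℝ)^(k-1)) := by ring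
      _ ≤ (k.factorial : ℝ) * ((n+k).factorial : ℝ) :=
          mul_le_mul_of_nonneg_left h1 (by positivity)
  -- step B
  have hB : (2*(k:ℝ)^2+1)/3 ≤ (k:ℝ)^2 := by nlinarith
  -- combine
  have hkfac : (k.factorial : ℝ) ≤ (k:ℝ)^(k-1) := by exact_mod_cast fact_le_pow k hk1
  have hksq : (k:ℝ)^2 ≤ (4:ℝ)^(k-1) := by exact_mod_cast sq_le_four_pow k hk
  have hfrac_nonneg : (0:ℝ) ≤ (k.factorial : ℝ) * ((n+1).factorial : ℝ) / ((n+k).factorial : ℝ) := by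
    positivity
  calc (2*(k:ℝ)^2+1)/3 * ((k.factorial : ℝ) * ((n+1).factorial : ℝ) / ((n+k).factorial : ℝ))
      ≤ (k:ℝ)^2 * ((k.factorial : ℝ) / (n:ℝ)^(k-1)) := by
        apply mul_le_mul hB hA hfrac_nonneg (by positivity)
    _ ≤ (4:ℝ)^(k-1) * ((k:ℝ)^(k-1) / (n:ℝ)^(k-1)) := by
        apply mul_le_mul hksq (div_le_div_of_nonneg_right hkfac hnpow.le) (by positivity) (by positivity)
    _ = (4*(k:ℝ)/(n:ℝ))^(k-1) := by
        rw [div_pow, mul_pow]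
        ring

lemma eventually_le_two_pow (u : ℕ → ℝ) (hu : ∀ m, 0 ≤ u m)
    (h : limsup (fun m : ℕ => ((u m ^ (1 / (m : ℝ)) : ℝ) : EReal)) atTop ≤ 1) :
    ∀ᶠ m in atTop, u m ≤ 2 ^ m := by
  have h2 : limsup (fun m : ℕ => ((u m ^ (1 / (m : ℝ)) : ℝ) : EReal)) atTop < ((2:ℝ) : EReal) := by
    refine lt_of_le_of_lt h ?_
    exact_mod_cast (by norm_num : (1:ℝ) < 2)
  have hev := Filter.eventually_lt_of_limsup_lt h2
  filter_upwards [hev, Filter.eventually_ge_atTop 1] with m hm hm1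
  have hmR : (m : ℝ) ≠ 0 := by
    exact_mod_cast Nat.one_le_iff_ne_zero.1 hm1
  have hlt : u m ^ (1 / (m : ℝ)) < 2 := by exact_mod_cast hm
  have hx : u m = (u m ^ (1 / (m : ℝ))) ^ (m : ℕ) := by
    rw [← Real.rpow_natCast (u m ^ (1 / (m:ℝ))) m, ← Real.rpow_mul (hu m),
      one_div, inv_mul_cancel₀ hmR, Real.rpow_one]
  rw [hx]
  exact pow_le_pow_left₀ (Real.rpow_nonneg (hu m) _) hlt.le m

lemma summable_one (a : ℕ → ℂ) (np : ℕ → ℕ) (hmono : StrictMono np)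
    (hra : limsup (fun m : ℕ => ((‖a m‖ ^ (1 / (m : ℝ)) : ℝ) : EReal)) atTop ≤ 1)
    (hbound : ∀ p : ℕ, 1 ≤ p → ∀ k : ℕ, 2 ≤ k →
      ‖a (np p + k)‖ ≤
        (2 * (k : ℝ) ^ 2 + 1) / 3 *
          ((k.factorial : ℝ) * ((np p + 1).factorial : ℝ) / ((np p + k).factorial : ℝ)) *
          ‖a (np p + 1)‖)
    (hsecond : Tendsto
      (fun p : ℕ => (((np (p + 2) : ℤ) - 2 * (np (p + 1) : ℤ) + (np p : ℤ) : ℤ) : ℝ) / (np p : ℝ))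
      atTop (nhds 0)) :
    ∀ z : ℂ, Summable (fun k : ℕ => a k * z ^ k) := by
  have hnp_ge : ∀ p, p ≤ np p := fun p => hmono.le_apply
  have hd1 : ∀ p, (1:ℝ) ≤ ((np (p+1) : ℝ)) - (np p : ℝ) := by
    intro p
    have h := hmono (Nat.lt_succ_self p)
    have : np p + 1 ≤ np (p+1) := h
    have := (Nat.cast_le (α := ℝ)).2 this
    push_cast at this
    linarith
  have hratio : Tendsto (fun p => ((np (p+1) : ℝ) - np p) / np p) atTop (nhds 0) := by
    apply ratio_to_zero (fun p => (np p : ℝ)) hd1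
      (fun p => by show (p:ℝ) ≤ (np p : ℝ); exact_mod_cast hnp_ge p)
    apply Tendsto.congr _ hsecond
    intro p
    push_cast
    ring
  have hinv : Tendsto (fun p => 1 / (np p : ℝ)) atTop (nhds 0) := by
    have h1 : Tendsto (fun p => (np p : ℝ)) atTop atTop :=
      tendsto_natCast_atTop_atTop.comp hmono.tendsto_atTop
    exact h1.inv_tendsto_atTop.congr (fun p => by simp [one_div])
  have hcomb : Tendsto (fun p => (4 * (((np (p+1) : ℝ) - np p) + 1)) / (np p : ℝ)) atTop (nhds 0) := by
    have h := (hratio.const_mul (4:ℝ)).add (hinv.const_mul (4:ℝ))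
    rw [mul_zero, add_zero] at h
    apply h.congr
    intro p
    ring
  obtain ⟨M₀, hM₀⟩ := eventually_atTop.1
    (eventually_le_two_pow (fun m => ‖a m‖) (fun m => norm_nonneg _) hra)
  intro z
  set R : ℝ := ‖z‖ + 1 with hRdef
  have hR1 : 1 ≤ R := by
    have h := norm_nonneg z
    rw [hRdef]; linarith
  have hR0 : 0 < R := by linarith
  set η : ℝ := 1 / (2*R) with hηdef
  have hη0 : 0 < η := by positivity
  have hη1 : η ≤ 1 := by rw [hηdef]; rw [div_le_one (by linarith)]; linarith
  have hηR : η * R = 1/2 := by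
    rw [hηdef]; field_simp
  obtain ⟨P₁, hP₁⟩ := Metric.tendsto_atTop.1 hcomb η hη0
  set P := max (max P₁ 1) M₀ with hPdef
  have hPP₁ : P₁ ≤ P := le_trans (le_max_left _ _) (le_max_left _ _)
  have hP1 : 1 ≤ P := le_trans (le_max_right _ _) (le_max_left _ _)
  have hPM₀ : M₀ ≤ P := le_max_right _ _
  set N := np P with hNdef
  have hsmall : ∀ p, P ≤ p → 4 * (((np (p+1) : ℝ) - np p) + 1) ≤ η * np p := by
    intro p hp
    have hnpos : (0:ℝ) < np p := by
      have : 1 ≤ np p := le_trans (le_trans hP1 hp) (hnp_ge p)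
      exact_mod_cast this
    have h := hP₁ p (le_trans hPP₁ hp)
    rw [Real.dist_eq, sub_zero] at h
    have habs : (4 * (((np (p+1) : ℝ) - np p) + 1)) / np p ≤ η := (abs_lt.1 h).2.le
    calc 4 * (((np (p+1) : ℝ) - np p) + 1)
        = ((4 * (((np (p+1) : ℝ) - np p) + 1)) / np p) * np p := by field_simp
      _ ≤ η * np p := mul_le_mul_of_nonneg_right habs hnpos.le
  have keybound : ∀ p, P ≤ p → ∀ k : ℕ, 1 ≤ k → ((k:ℝ) ≤ ((np (p+1) : ℝ) - np p) + 1) →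
      ‖a (np p + k)‖ ≤ η^(k-1) * ‖a (np p + 1)‖ := by
    intro p hp k hk1 hkle
    rcases eq_or_lt_of_le hk1 with h | h
    · rw [← h]
      simp
    · have hk2 : 2 ≤ k := h
      have hp1 : 1 ≤ p := le_trans hP1 hp
      have hnp1 : 1 ≤ np p := le_trans hp1 (hnp_ge p)
      have hnpos : (0:ℝ) < np p := by exact_mod_cast hnp1
      have hb := hbound p hp1 k hk2
      have harith := arith_bound (np p) k hnp1 hk2
      have hbase : 4*(k:ℝ)/(np p : ℝ) ≤ η := by
        rw [div_le_iff₀ hnpos]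
        calc 4*(k:ℝ) ≤ 4 * (((np (p+1) : ℝ) - np p) + 1) := by linarith
          _ ≤ η * np p := hsmall p hp
      have hbase0 : (0:ℝ) ≤ 4*(k:ℝ)/(np p : ℝ) := by positivity
      calc ‖a (np p + k)‖
          ≤ (2 * (k : ℝ) ^ 2 + 1) / 3 *
              ((k.factorial : ℝ) * ((np p + 1).factorial : ℝ) / ((np p + k).factorial : ℝ)) *
              ‖a (np p + 1)‖ := hb
        _ ≤ (4*(k:ℝ)/(np p : ℝ))^(k-1) * ‖a (np p + 1)‖ :=
            mul_le_mul_of_nonneg_right harith (norm_nonneg _)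
        _ ≤ η^(k-1) * ‖a (np p + 1)‖ :=
            mul_le_mul_of_nonneg_right (pow_le_pow_left₀ hbase0 hbase _) (norm_nonneg _)
  have chain : ∀ j : ℕ,
      ‖a (np (P+j) + 1)‖ ≤ η^(np (P+j) - N) * ‖a (np P + 1)‖ := by
    intro j
    induction j with
    | zero => simp [hNdef]
    | succ j ih =>
      set p := P + j with hpdef
      have hple : np p ≤ np (p+1) := le_of_lt (hmono (Nat.lt_succ_self p))
      have hNle : N ≤ np p := hmono.monotone (Nat.le_add_right P j)
      set d := np (p+1) - np p with hddef
      have hmk : np p + (d+1) = np (p+1) + 1 := by omega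
      have hkle : ((d+1 : ℕ) : ℝ) ≤ ((np (p+1) : ℝ) - np p) + 1 := by
        have : ((d:ℕ):ℝ) = (np (p+1) : ℝ) - np p := by
          rw [hddef, Nat.cast_sub hple]
        push_cast
        push_cast at this
        linarith
      have h1 := keybound p (Nat.le_add_right P j) (d+1) (by omega) hkle
      rw [hmk] at h1
      have heq : P + (j+1) = p + 1 := by omega
      rw [heq]
      calc ‖a (np (p+1) + 1)‖
          ≤ η^(d+1-1) * ‖a (np p + 1)‖ := h1
        _ ≤ η^d * (η^(np p - N) * ‖a (np P + 1)‖) :=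
            mul_le_mul_of_nonneg_left (by simpa [hpdef] using ih) (by positivity)
        _ = η^(np (p+1) - N) * ‖a (np P + 1)‖ := by
            rw [← mul_assoc, ← pow_add]
            congr 2
            omega
  have final : ∀ m, N + 1 ≤ m →
      ‖a m‖ ≤ η^(m - 1 - N) * ‖a (np P + 1)‖ := by
    intro m hm
    have hex : ∃ q, m ≤ np (q+1) := ⟨m, by have := hnp_ge (m+1); omega⟩
    set q := Nat.find hex with hqdef
    have hq : m ≤ np (q+1) := Nat.find_spec hex
    have hPq : P ≤ q := by
      by_contra hc
      push_neg at hc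
      have h1 : q + 1 ≤ P := hc
      have h2 : np (q+1) ≤ np P := hmono.monotone h1
      omega
    have hq1 : 1 ≤ q := le_trans hP1 hPq
    have hlow : np q < m := by
      have hmin := Nat.find_min hex (show q - 1 < q by omega)
      push_neg at hmin
      have : q - 1 + 1 = q := by omega
      rwa [this] at hmin
    have hple : np q ≤ np (q+1) := le_of_lt (hmono (Nat.lt_succ_self q))
    have hNle : N ≤ np q := hmono.monotone hPq
    set k := m - np q with hkdef
    have hk1 : 1 ≤ k := by omega
    have hmk : np q + k = m := by omega
    have hkle : (k:ℝ) ≤ ((np (q+1) : ℝ) - np q) + 1 := by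
      have hkn : k ≤ np (q+1) - np q := by omega
      have : ((k:ℕ):ℝ) ≤ ((np (q+1) - np q : ℕ) : ℝ) := by exact_mod_cast hkn
      rw [Nat.cast_sub hple] at this
      linarith
    obtain ⟨j, hj⟩ : ∃ j, q = P + j := ⟨q - P, by omega⟩
    have h1 := keybound q hPq k hk1 hkle
    rw [hmk] at h1
    have h2 := chain j
    rw [← hj] at h2
    calc ‖a m‖
        ≤ η^(k-1) * ‖a (np q + 1)‖ := h1
      _ ≤ η^(k-1) * (η^(np q - N) * ‖a (np P + 1)‖) :=
          mul_le_mul_of_nonneg_left h2 (by positivity)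
      _ = η^(m - 1 - N) * ‖a (np P + 1)‖ := by
          rw [← mul_assoc, ← pow_add]
          congr 2
          omega
  have hAP : ‖a (np P + 1)‖ ≤ 2^(N+1) := by
    have := hM₀ (np P + 1) (by have := hnp_ge P; omega)
    simpa [hNdef] using this
  -- summability
  set C : ℝ := 2^(N+1) * (2*R)^(N+1) with hCdef
  apply Summable.of_norm_bounded_eventually (g := fun m : ℕ => C * (1/2)^m)
  · exact (summable_geometric_of_lt_one (by norm_num) (by norm_num)).mul_left C
  · rw [Nat.cofinite_eq_atTop]
    filter_upwards [eventually_ge_atTop (N+1)] with m hm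
    have hzR : ‖z‖ ≤ R := by simp [hRdef]
    have hnorm : ‖a m * z^m‖ = ‖a m‖ * (‖z‖)^m := by
      rw [norm_mul, norm_pow]
    have hηm : η^(m - 1 - N) = η^m / η^(N+1) := by
      have : m - 1 - N = m - (N+1) := by omega
      rw [this, pow_sub₀ η (ne_of_gt hη0) hm, div_eq_mul_inv]
    have hinv2 : (η^(N+1))⁻¹ = (2*R)^(N+1) := by
      rw [hηdef, one_div, inv_pow, inv_inv]
    calc ‖a m * z^m‖ = ‖a m‖ * (‖z‖)^m := hnorm
      _ ≤ ‖a m‖ * R^m :=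
          mul_le_mul_of_nonneg_left (pow_le_pow_left₀ (norm_nonneg _) hzR m)
            (norm_nonneg _)
      _ ≤ (η^(m - 1 - N) * ‖a (np P + 1)‖) * R^m :=
          mul_le_mul_of_nonneg_right (final m hm) (by positivity)
      _ ≤ (η^(m - 1 - N) * 2^(N+1)) * R^m :=
          mul_le_mul_of_nonneg_right
            (mul_le_mul_of_nonneg_left hAP (by positivity)) (by positivity)
      _ = C * ((η*R)^m) := by
          rw [hηm, div_eq_mul_inv, hinv2, hCdef, mul_pow η R m]
          ring
      _ = C * (1/2)^m := by rw [hηR]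


theorem entire_of_small_second_differences (a b : ℕ → ℂ) (np : ℕ → ℕ)
    (hmono : StrictMono np)
    (hra : limsup (fun m : ℕ => ((‖a m‖ ^ (1 / (m : ℝ)) : ℝ) : EReal)) atTop ≤ 1)
    (hrb : limsup (fun m : ℕ => ((‖b m‖ ^ (1 / (m : ℝ)) : ℝ) : EReal)) atTop ≤ 1)
    (hboundA : ∀ p : ℕ, 1 ≤ p → ∀ k : ℕ, 2 ≤ k →
      ‖a (np p + k)‖ ≤
        (2 * (k : ℝ) ^ 2 + 1) / 3 *
          ((k.factorial : ℝ) * ((np p + 1).factorial : ℝ) / ((np p + k).factorial : ℝ)) *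
          ‖a (np p + 1)‖)
    (hboundB : ∀ p : ℕ, 1 ≤ p → ∀ k : ℕ, 2 ≤ k →
      ‖b (np p + k)‖ ≤
        (2 * (k : ℝ) ^ 2 + 1) / 3 *
          ((k.factorial : ℝ) * ((np p + 1).factorial : ℝ) / ((np p + k).factorial : ℝ)) *
          ‖b (np p + 1)‖)
    (hsecond : Tendsto
      (fun p : ℕ => (((np (p + 2) : ℤ) - 2 * (np (p + 1) : ℤ) + (np p : ℤ) : ℤ) : ℝ) / (np p : ℝ))
      atTop (nhds 0)) :
    ∀ z : ℂ, Summable (fun k : ℕ => a k * z ^ k) ∧ Summable (fun k : ℕ => b k * z ^ k) :=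
  fun z => ⟨summable_one a np hmono hra hboundA hsecond z,
    summable_one b np hmono hrb hboundB hsecond z⟩
end
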